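/- arXiv:1708.09061 — 4 statements merged into one kernel-verified Lean document; each statement's English description precedes it below -/
import Mathlib

section
/- Let κ be an uncountable cardinal such that for every cardinal μ < κ and every coloring d : [κ]^{<ω} → μ there is H ∈ [κ]^κ with d constant on [H]^n for every n ∈ ω (this holds when κ is a Ramsey cardinal). Let 1 ≤ λ < κ be a cardinal and let c : [κ]^κ → λ+1 be a function such that for each α < λ, the preimage c⁻¹(α) is in Σ([κ]^{<ω}, [κ]^{<κ}) (no requirement is placed on c⁻¹(λ)). Then c is Ramsey, i.e., there is H ∈ [κ]^κ such that c is constant on [H]^κ. -/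
open Set Cardinal

universe u

/-- `[κ]^κ`: the subsets of `κ` (viewed as the set of ordinals `< κ`) of cardinality `κ`
(equivalently, of order type `κ`). -/
def bigSets (κ : Cardinal.{0}) : Set (Set Ordinal.{0}) :=
  {X | X ⊆ Set.Iio κ.ord ∧ #X = Cardinal.lift.{1} κ}

/-- `[H]^κ`: the subsets of `H` of cardinality `κ`. -/
def subBig (κ : Cardinal.{0}) (H : Set Ordinal.{0}) : Set (Set Ordinal.{0}) :=
  {X | X ⊆ H ∧ #X = Cardinal.lift.{1} κ}

/-- `X` matches the pattern `(A,B)`: `A ⊆ X` and `B ∩ X = ∅`. -/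
def Matches (X A B : Set Ordinal.{0}) : Prop :=
  A ⊆ X ∧ B ∩ X = ∅

/-- `[A;B]`: the members of `[κ]^κ` matching the pattern `(A,B)`. -/
def patternSet (κ : Cardinal.{0}) (A B : Set Ordinal.{0}) : Set (Set Ordinal.{0}) :=
  {X ∈ bigSets κ | Matches X A B}

/-- `Σ(𝒜,ℬ)`: the subsets of `[κ]^κ` which are unions of sets `[A;B]` with
`A ∈ 𝒜`, `B ∈ ℬ`, `A ∩ B = ∅`. -/
def SigmaFam (κ : Cardinal.{0}) (𝒜 ℬ : Set (Set Ordinal.{0})) : Set (Set (Set Ordinal.{0})) :=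
  {S | ∃ Q : Set (Set Ordinal.{0} × Set Ordinal.{0}),
    (∀ p ∈ Q, p.1 ∈ 𝒜 ∧ p.2 ∈ ℬ ∧ Disjoint p.1 p.2) ∧
    S = {X ∈ bigSets κ | ∃ p ∈ Q, Matches X p.1 p.2}}

/-- `Δ(𝒜,ℬ)`: those `S` with both `S` and `[κ]^κ \ S` in `Σ(𝒜,ℬ)`. -/
def DeltaFam (κ : Cardinal.{0}) (𝒜 ℬ : Set (Set Ordinal.{0})) : Set (Set (Set Ordinal.{0})) :=
  {S | S ∈ SigmaFam κ 𝒜 ℬ ∧ bigSets κ \ S ∈ SigmaFam κ 𝒜 ℬ}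

/-- `[κ]^{<γ}`: subsets of `κ` of cardinality `< γ`. -/
def smallSets (κ γ : Cardinal.{0}) : Set (Set Ordinal.{0}) :=
  {A | A ⊆ Set.Iio κ.ord ∧ #A < Cardinal.lift.{1} γ}

/-- `[κ]^n`: `n`-element subsets of `κ`. -/
def nSets (κ : Cardinal.{0}) (n : ℕ) : Set (Set Ordinal.{0}) :=
  {A | A ⊆ Set.Iio κ.ord ∧ #A = n}

/-- `[κ]^{<ω}`: finite subsets of `κ`. -/
def finSets (κ : Cardinal.{0}) : Set (Set Ordinal.{0}) :=
  {A | A ⊆ Set.Iio κ.ord ∧ A.Finite}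

/-- `[κ]^ω`: subsets of `κ` of order type `ω`. -/
def omegaSets (κ : Cardinal.{0}) : Set (Set Ordinal.{0}) :=
  {A | A ⊆ Set.Iio κ.ord ∧ A.Infinite ∧ ∀ a ∈ A, (A ∩ Set.Iio a).Finite}

/-- `S ⊆ [κ]^κ` is Ramsey: some `H ∈ [κ]^κ` is homogeneous for `S`. -/
def IsRamsey (κ : Cardinal.{0}) (S : Set (Set Ordinal.{0})) : Prop :=
  ∃ H ∈ bigSets κ, subBig κ H ⊆ S ∨ subBig κ H ∩ S = ∅

private lemma mk_Iio_ord' (κ : Cardinal.{0}) : #(Set.Iio κ.ord) = Cardinal.lift.{1} κ := by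
  rw [Ordinal.mk_Iio_ordinal, Cardinal.card_ord]

private lemma mk_Iic_lt (κ : Cardinal.{0}) (hκ : ℵ₀ < κ) {p : Ordinal.{0}}
    (hp : p < κ.ord) : #(Set.Iic p) < Cardinal.lift.{1} κ := by
  rw [← Order.Iio_succ_of_not_isMax (not_isMax p), Ordinal.mk_Iio_ordinal, Ordinal.card_succ]
  exact Cardinal.lift_lt.2 (Cardinal.add_lt_of_lt hκ.le (Cardinal.lt_ord.1 hp)
    (one_lt_aleph0.trans hκ))

private lemma mk_diff_eq (κ : Cardinal.{0}) (hκ : ℵ₀ < κ) {X B : Set Ordinal.{0}}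
    (hX : #X = Cardinal.lift.{1} κ) (hB : #B < Cardinal.lift.{1} κ) :
    #(X \ B : Set Ordinal.{0}) = Cardinal.lift.{1} κ := by
  refine le_antisymm (hX ▸ Cardinal.mk_le_mk_of_subset diff_subset) ?_
  by_contra hlt
  push_neg at hlt
  have h1 : X ⊆ (X \ B) ∪ (X ∩ B) := by
    intro x hx
    by_cases hxB : x ∈ B
    · exact Or.inr ⟨hx, hxB⟩
    · exact Or.inl ⟨hx, hxB⟩
  have h2 : #X ≤ #(X \ B : Set Ordinal.{0}) + #(X ∩ B : Set Ordinal.{0}) :=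
    (Cardinal.mk_le_mk_of_subset h1).trans (Cardinal.mk_union_le _ _)
  have h3 : #(X ∩ B : Set Ordinal.{0}) < Cardinal.lift.{1} κ :=
    lt_of_le_of_lt (Cardinal.mk_le_mk_of_subset inter_subset_right) hB
  have := h2.trans_lt (Cardinal.add_lt_of_lt (by simpa using hκ.le) hlt h3)
  exact absurd hX (ne_of_lt this)

private lemma isRegular_lift' {κ : Cardinal.{0}} (h : Cardinal.IsRegular κ) :
    Cardinal.IsRegular (Cardinal.lift.{1} κ) := by
  constructor
  · simpa using h.1
  · rw [← Cardinal.lift_ord, ← Ordinal.lift_cof]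
    exact Cardinal.lift_le.2 h.2

private lemma mk_iUnion_lt' (κ : Cardinal.{0}) (hreg : Cardinal.IsRegular κ) {ι : Type 1}
    (f : ι → Set Ordinal.{0}) (hι : #ι < Cardinal.lift.{1} κ)
    (hf : ∀ i, #(f i) < Cardinal.lift.{1} κ) : #(⋃ i, f i) < Cardinal.lift.{1} κ :=
  Cardinal.mk_iUnion_le_sum_mk.trans_lt
    (Cardinal.sum_lt_of_isRegular (isRegular_lift' hreg) hι hf)

private lemma mk_finset_le' (α : Type 1) : #(Finset α) ≤ max #α ℵ₀ := by
  rcases finite_or_infinite α with h | h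
  · haveI : Fintype α := Fintype.ofFinite α
    exact le_max_of_le_right (Cardinal.lt_aleph0_of_finite (Finset α)).le
  · exact le_max_of_le_left (Cardinal.mk_finset_of_infinite α).le

private lemma mk_nsubsets_le (P : Set Ordinal.{0}) (n : ℕ) :
    #{A : Set Ordinal.{0} | A ⊆ P ∧ #A = (n : Cardinal)} ≤ max #P ℵ₀ := by
  classical
  refine le_trans ?_ (mk_finset_le' P)
  have hfin : ∀ A : {A : Set Ordinal.{0} | A ⊆ P ∧ #A = (n : Cardinal)},
      ((Subtype.val ⁻¹' (A : Set Ordinal.{0})) : Set ↥P).Finite := by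
    rintro ⟨A, hAP, hAn⟩
    apply Set.Finite.preimage Subtype.val_injective.injOn
    rw [← Cardinal.lt_aleph0_iff_set_finite, hAn]
    exact Cardinal.nat_lt_aleph0 n
  refine Cardinal.mk_le_of_injective (f := fun A => (hfin A).toFinset) ?_
  rintro ⟨A₁, h₁, hc₁⟩ ⟨A₂, h₂, hc₂⟩ hEq
  have : (Subtype.val ⁻¹' A₁ : Set ↥P) = Subtype.val ⁻¹' A₂ := by
    have := congrArg (fun (t : Finset ↥P) => (t : Set ↥P)) hEq
    simpa [Set.Finite.coe_toFinset] using this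
  have him : A₁ = A₂ := by
    have e1 : Subtype.val '' (Subtype.val ⁻¹' A₁ : Set ↥P) = A₁ :=
      Set.image_preimage_eq_of_subset (by rwa [Subtype.range_coe])
    have e2 : Subtype.val '' (Subtype.val ⁻¹' A₂ : Set ↥P) = A₂ :=
      Set.image_preimage_eq_of_subset (by rwa [Subtype.range_coe])
    rw [← e1, this, e2]
  exact Subtype.ext him

private lemma initseg (n : ℕ) {X : Set Ordinal.{0}} (hX : ℵ₀ ≤ #X) :
    ∃ A, A ⊆ X ∧ #A = (n : Cardinal) ∧ ∀ x ∈ X \ A, ∀ a ∈ A, a < x := by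
  induction n with
  | zero => exact ⟨∅, empty_subset _, by simp, by simp⟩
  | succ n ih =>
    obtain ⟨A, hAX, hAn, hAlt⟩ := ih
    have hne : (X \ A).Nonempty := by
      rw [Set.nonempty_iff_ne_empty]
      intro h
      have hXA : X ⊆ A := by rwa [Set.diff_eq_empty] at h
      have : #X < ℵ₀ := lt_of_le_of_lt (Cardinal.mk_le_mk_of_subset hXA)
        (hAn ▸ Cardinal.nat_lt_aleph0 n)
      exact absurd hX this.not_ge
    set m := sInf (X \ A) with hm
    have hmmem : m ∈ X \ A := csInf_mem hne
    refine ⟨insert m A, insert_subset hmmem.1 hAX, ?_, ?_⟩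
    · rw [Cardinal.mk_insert hmmem.2, hAn]
      norm_cast
    · rintro x ⟨hxX, hxA'⟩ a ha
      have hxA : x ∉ A := fun h => hxA' (Set.mem_insert_iff.2 (Or.inr h))
      have hxm : x ≠ m := fun h => hxA' (h ▸ Set.mem_insert _ _)
      rcases Set.mem_insert_iff.1 ha with rfl | haA
      · exact lt_of_le_of_ne (csInf_le' ⟨hxX, hxA⟩) (Ne.symm hxm)
      · exact hAlt x ⟨hxX, hxA⟩ a haA

private lemma finite_mk_nat {A : Set Ordinal.{0}} (h : A.Finite) :
    ∃ n : ℕ, #A = (n : Cardinal) := by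
  have : #A < ℵ₀ := Cardinal.lt_aleph0_iff_set_finite.2 h
  exact Cardinal.lt_aleph0.1 this
private lemma regular_of_ram (κ : Cardinal.{0}) (hκ : ℵ₀ < κ)
    (hram : ∀ μ : Cardinal.{0}, μ < κ →
      ∀ d : Set Ordinal.{0} → Ordinal.{0},
        (∀ A ∈ finSets κ, d A < μ.ord) →
        ∃ H ∈ bigSets κ, ∀ n : ℕ,
          ∀ A₁ ∈ nSets κ n, ∀ A₂ ∈ nSets κ n, A₁ ⊆ H → A₂ ⊆ H → d A₁ = d A₂) :
    Cardinal.IsRegular κ := by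
  classical
  refine ⟨hκ.le, ?_⟩
  by_contra hcof
  push_neg at hcof
  obtain ⟨ι, f, hlsub, hi⟩ := Ordinal.exists_lsub_cof κ.ord
  set piece : Ordinal.{0} → Ordinal.{0} := fun a => sInf (Set.range f ∩ Set.Ici a) with hpiece
  have hpc : ∀ a < κ.ord, piece a ∈ Set.range f ∩ Set.Ici a := by
    intro a ha
    apply csInf_mem
    rw [← hlsub] at ha
    obtain ⟨i, hi'⟩ := Ordinal.lt_lsub_iff.mp ha
    exact ⟨f i, ⟨i, rfl⟩, hi'⟩
  have hplt : ∀ a < κ.ord, piece a < κ.ord := by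
    intro a ha
    obtain ⟨⟨i, hfi⟩, -⟩ := hpc a ha
    rw [← hfi, ← hlsub]
    exact Ordinal.lt_lsub f i
  set d : Set Ordinal.{0} → Ordinal.{0} := fun A =>
    if ∀ x ∈ A, ∀ y ∈ A, piece x = piece y then 0 else 1 with hd
  have h2κ : (2 : Cardinal.{0}) < κ := (Cardinal.nat_lt_aleph0 2).trans_le (by exact_mod_cast hκ.le)
  have hdlt : ∀ A ∈ finSets κ, d A < (2 : Cardinal.{0}).ord := by
    intro A _
    have h2 : ((2 : ℕ) : Cardinal.{0}) = (2 : Cardinal.{0}) := by norm_cast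
    rw [← h2, Cardinal.ord_nat]
    simp only [hd]
    split
    · exact_mod_cast (by norm_num : (0 : ℕ) < 2)
    · exact_mod_cast (by norm_num : (1 : ℕ) < 2)
  obtain ⟨H₁, hH₁big, hH₁⟩ := hram 2 h2κ d hdlt
  have hpair : ∀ x ∈ H₁, ∀ y ∈ H₁, x ≠ y → {x, y} ∈ nSets κ 2 ∧ ({x, y} : Set Ordinal.{0}) ⊆ H₁ := by
    intro x hx y hy hxy
    refine ⟨⟨?_, ?_⟩, ?_⟩
    · intro z hz
      rcases hz with rfl | hz
      · exact hH₁big.1 hx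
      · exact hH₁big.1 (by rwa [Set.mem_singleton_iff.1 hz])
    · rw [Cardinal.mk_insert (by simpa using hxy), Cardinal.mk_singleton]
      norm_num
    · intro z hz
      rcases hz with rfl | hz
      · exact hx
      · rwa [Set.mem_singleton_iff.1 hz]
  -- two distinct elements
  have h1lt : (1 : Cardinal.{1}) < #H₁ := by
    rw [hH₁big.2]
    have : (ℵ₀ : Cardinal.{1}) ≤ Cardinal.lift.{1} κ := by
      rw [← Cardinal.lift_aleph0.{1,0}]
      exact Cardinal.lift_le.2 hκ.le
    exact lt_of_lt_of_le one_lt_aleph0 this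
  obtain ⟨⟨a, ha⟩, ⟨b, hb⟩, hab⟩ := Cardinal.one_lt_iff_nontrivial.1 h1lt
  have hab' : a ≠ b := fun h => hab (Subtype.ext h)
  by_cases hcase : d {a, b} = 0
  · -- all pieces equal on H₁
    have hall : ∀ x ∈ H₁, piece x = piece a := by
      intro x hx
      by_cases hxa : x = a
      · rw [hxa]
      · have hp := hpair x hx a ha hxa
        have hpa := hpair a ha b hb hab'
        have : d {x, a} = d {a, b} := hH₁ 2 _ hp.1 _ hpa.1 hp.2 hpa.2
        rw [hcase] at this
        have hcond : ∀ u ∈ ({x, a} : Set Ordinal.{0}), ∀ v ∈ ({x, a} : Set Ordinal.{0}),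
            piece u = piece v := by
          by_contra hc
          simp only [hd, if_neg hc] at this
          exact one_ne_zero this
        exact hcond x (Set.mem_insert _ _) a (Set.mem_insert_iff.2 (Or.inr rfl))
    have hsub : H₁ ⊆ Set.Iic (piece a) := by
      intro x hx
      have := (hpc x (hH₁big.1 hx)).2
      exact le_trans this (le_of_eq (hall x hx))
    have : Cardinal.lift.{1} κ < Cardinal.lift.{1} κ :=
      lt_of_le_of_lt (hH₁big.2 ▸ Cardinal.mk_le_mk_of_subset hsub)
        (mk_Iic_lt κ hκ (hplt a (hH₁big.1 ha)))
    exact absurd this (lt_irrefl _)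
  · -- pieces injective on H₁
    have hinj : Set.InjOn piece H₁ := by
      intro x hx y hy hxy
      by_contra hne
      have hp := hpair x hx y hy hne
      have hpa := hpair a ha b hb hab'
      have heq : d {x, y} = d {a, b} := hH₁ 2 _ hp.1 _ hpa.1 hp.2 hpa.2
      have hcond : ∀ u ∈ ({x, y} : Set Ordinal.{0}), ∀ v ∈ ({x, y} : Set Ordinal.{0}),
          piece u = piece v := by
        have hux : ∀ u ∈ ({x, y} : Set Ordinal.{0}), piece u = piece x := by
          intro u hu
          rcases hu with rfl | hu
          · rfl
          · rw [Set.mem_singleton_iff.1 hu]; exact hxy.symm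
        intro u hu v hv
        rw [hux u hu, hux v hv]
      have : d {x, y} = 0 := by simp only [hd]; rw [if_pos hcond]
      rw [this] at heq
      exact hcase heq.symm
    have hlt : #H₁ < Cardinal.lift.{1} κ := by
      have h1 : #H₁ = #(piece '' H₁) := (Cardinal.mk_image_eq_of_injOn piece H₁ hinj).symm
      have h2 : piece '' H₁ ⊆ Set.range f := by
        rintro - ⟨x, hx, rfl⟩
        exact (hpc x (hH₁big.1 hx)).1
      have h3 : #(Set.range f) ≤ Cardinal.lift.{1} #ι := by
        simpa using Cardinal.mk_range_le_lift (f := f)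
      calc #H₁ = #(piece '' H₁) := h1
        _ ≤ #(Set.range f) := Cardinal.mk_le_mk_of_subset h2
        _ ≤ Cardinal.lift.{1} #ι := h3
        _ < Cardinal.lift.{1} κ := by rw [hi]; exact Cardinal.lift_lt.2 hcof
    rw [hH₁big.2] at hlt
    exact absurd hlt (lt_irrefl _)
/-- Let `κ` be an uncountable cardinal such that every
coloring `d : [κ]^{<ω} → μ` with `μ < κ` colors admits `H ∈ [κ]^κ` with `d`
constant on `[H]^n` for every `n ∈ ω`.  Let `1 ≤ λ < κ` and `c : [κ]^κ → λ+1`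
with `c⁻¹(α) ∈ Σ([κ]^{<ω}, [κ]^{<κ})` for each `α < λ` (nothing is assumed
about `c⁻¹(λ)`).  Then `c` is Ramsey. -/
theorem statement11 (κ : Cardinal.{0}) (hκ : ℵ₀ < κ)
    (hram : ∀ μ : Cardinal.{0}, μ < κ →
      ∀ d : Set Ordinal.{0} → Ordinal.{0},
        (∀ A ∈ finSets κ, d A < μ.ord) →
        ∃ H ∈ bigSets κ, ∀ n : ℕ,
          ∀ A₁ ∈ nSets κ n, ∀ A₂ ∈ nSets κ n, A₁ ⊆ H → A₂ ⊆ H → d A₁ = d A₂)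
    (lam : Cardinal.{0}) (hlam1 : 1 ≤ lam) (hlamκ : lam < κ)
    (c : Set Ordinal.{0} → Ordinal.{0})
    (hc : ∀ X ∈ bigSets κ, c X ≤ lam.ord)
    (hpre : ∀ α < lam.ord,
      {X ∈ bigSets κ | c X = α} ∈ SigmaFam κ (finSets κ) (smallSets κ κ)) :
    ∃ H ∈ bigSets κ, ∀ X ∈ subBig κ H, ∀ Y ∈ subBig κ H, c X = c Y := by
  classical
  have hreg : Cardinal.IsRegular κ := regular_of_ram κ hκ hram
  have haleph : (ℵ₀ : Cardinal.{1}) ≤ Cardinal.lift.{1} κ := by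
    rw [← Cardinal.lift_aleph0.{1,0}]; exact Cardinal.lift_le.2 hκ.le
  have haleph' : (ℵ₀ : Cardinal.{1}) < Cardinal.lift.{1} κ := by
    rw [← Cardinal.lift_aleph0.{1,0}]; exact Cardinal.lift_lt.2 hκ
  choose Q hQprop using hpre
  have hQ1 := fun α hα => (hQprop α hα).1
  have hQ2 := fun α hα => (hQprop α hα).2
  set Q' : Ordinal.{0} → Set (Set Ordinal.{0} × Set Ordinal.{0}) :=
    fun α => if h : α < lam.ord then Q α h else ∅ with hQ'def
  set T : Set Ordinal.{0} → Set Ordinal.{0} := fun A => {α | ∃ B, (A, B) ∈ Q' α} with hTdef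
  have hTlt : ∀ {A α}, α ∈ T A → α < lam.ord := by
    intro A α hα
    simp only [hTdef, Set.mem_setOf_eq] at hα
    obtain ⟨B, hB⟩ := hα
    by_contra hcon
    simp only [hQ'def, dif_neg hcon] at hB
    exact hB
  set d : Set Ordinal.{0} → Ordinal.{0} := fun A =>
    if h : (T A).Nonempty then sInf (T A) + 1 else 0 with hddef
  set μ : Cardinal.{0} := max lam ℵ₀ with hμdef
  have hμκ : μ < κ := max_lt hlamκ hκ
  have hμord : Order.IsSuccLimit (μ.ord) := Cardinal.isSuccLimit_ord (le_max_right _ _)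
  have hlamμ : lam.ord ≤ μ.ord := Cardinal.ord_le_ord.2 (le_max_left _ _)
  have hdlt : ∀ A ∈ finSets κ, d A < μ.ord := by
    intro A _
    simp only [hddef]
    split
    · next hne =>
      have h1 : sInf (T A) < lam.ord := hTlt (csInf_mem hne)
      rw [Ordinal.add_one_eq_succ]
      exact hμord.succ_lt (h1.trans_le hlamμ)
    · exact hμord.pos
  obtain ⟨H₀, hH₀big, hhom⟩ := hram μ hμκ d hdlt
  have hkey : ∀ X, X ∈ bigSets κ → ∀ α (hα : α < lam.ord),
      (c X = α ↔ ∃ p ∈ Q α hα, Matches X p.1 p.2) := by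
    intro X hX α hα
    constructor
    · intro h
      have hmem : X ∈ {X ∈ bigSets κ | c X = α} := ⟨hX, h⟩
      rw [hQ2 α hα] at hmem
      exact hmem.2
    · intro h
      have hmem : X ∈ {X ∈ bigSets κ | ∃ p ∈ Q α hα, Matches X p.1 p.2} := ⟨hX, h⟩
      rw [← hQ2 α hα] at hmem
      exact hmem.2
  by_cases hcase : ∃ n : ℕ, ∃ A ∈ nSets κ n, A ⊆ H₀ ∧ d A ≠ 0
  · -- Case 2 : some level has patterns everywhere
    obtain ⟨n, A₀, hA₀n, hA₀H, hdA₀⟩ := hcase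
    have hTA₀ : (T A₀).Nonempty := by
      by_contra hcon
      simp only [hddef, dif_neg hcon] at hdA₀
      exact hdA₀ rfl
    set αs : Ordinal.{0} := sInf (T A₀) with hαs
    have hαsmem : αs ∈ T A₀ := csInf_mem hTA₀
    have hαslt : αs < lam.ord := hTlt hαsmem
    set BB : Set Ordinal.{0} → Set Ordinal.{0} := fun A =>
      if h : ∃ B, (A, B) ∈ Q' αs then Classical.choose h else ∅ with hBBdef
    have hBBmem : ∀ A, (∃ B, (A, B) ∈ Q' αs) → (A, BB A) ∈ Q αs hαslt := by
      intro A h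
      have hspec := Classical.choose_spec h
      simp only [hBBdef, dif_pos h]
      simpa only [hQ'def, dif_pos hαslt] using hspec
    have hBBsmall : ∀ A, #(BB A) < Cardinal.lift.{1} κ := by
      intro A
      by_cases h : ∃ B, (A, B) ∈ Q' αs
      · exact ((hQ1 αs hαslt _ (hBBmem A h)).2.1).2
      · simp only [hBBdef, dif_neg h, Cardinal.mk_emptyCollection]
        exact aleph0_pos.trans_le haleph
    have hBBdisj : ∀ A, (∃ B, (A, B) ∈ Q' αs) → Disjoint A (BB A) := fun A h =>
      (hQ1 αs hαslt _ (hBBmem A h)).2.2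
    have hApat : ∀ A ∈ nSets κ n, A ⊆ H₀ → (A, BB A) ∈ Q αs hαslt := by
      intro A hAn hAH
      have hdeq : d A = d A₀ := hhom n A hAn A₀ hA₀n hAH hA₀H
      have hdA₀eq : d A₀ = αs + 1 := by
        simp only [hddef, dif_pos hTA₀, hαs]
      have hTA : (T A).Nonempty := by
        by_contra hcon
        rw [hdA₀eq] at hdeq
        simp only [hddef, dif_neg hcon, Ordinal.add_one_eq_succ] at hdeq
        exact (Order.succ_ne_bot αs) hdeq.symm
      have hEq1 : sInf (T A) + 1 = αs + 1 := by
        rw [← hdA₀eq, ← hdeq]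
        simp only [hddef, dif_pos hTA]
      have hsinf : sInf (T A) = αs := by
        rwa [Ordinal.add_one_eq_succ, Ordinal.add_one_eq_succ, Order.succ_eq_succ_iff] at hEq1
      have hmemT : αs ∈ T A := hsinf ▸ csInf_mem hTA
      simp only [hTdef, Set.mem_setOf_eq] at hmemT
      exact hBBmem A hmemT
    -- construct homogeneous set via transfinite recursion
    set good : Set Ordinal.{0} → Set Ordinal.{0} := fun P =>
      {β | β ∈ H₀ ∧ (∀ p ∈ P, p < β) ∧
        ∀ A, A ⊆ P → #A = (n : Cardinal) → β ∉ BB A} with hgood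
    obtain ⟨hf, hfix⟩ : ∃ hf : Ordinal.{0} → Ordinal.{0},
        ∀ ξ, hf ξ = sInf (good (hf '' Set.Iio ξ)) := by
      refine ⟨WellFounded.fix wellFounded_lt
        (fun ξ ih => sInf (good {x | ∃ η, ∃ hη : η < ξ, ih η hη = x})), fun ξ => ?_⟩
      rw [WellFounded.fix_eq]
      apply congrArg (fun P => sInf (good P))
      ext x
      simp only [Set.mem_setOf_eq, Set.mem_image, Set.mem_Iio]
      exact ⟨fun ⟨η, hη, he⟩ => ⟨η, hη, he⟩, fun ⟨η, hη, he⟩ => ⟨η, hη, he⟩⟩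
    have hgoodne : ∀ ξ, ξ < κ.ord → (∀ η, η < ξ → hf η ∈ H₀) →
        (good (hf '' Set.Iio ξ)).Nonempty := by
      intro ξ hξ hprev
      set P : Set Ordinal.{0} := hf '' Set.Iio ξ with hP
      have hPsub : P ⊆ Set.Iio κ.ord := by
        rintro - ⟨η, hη, rfl⟩
        exact hH₀big.1 (hprev η hη)
      have hPcard : #P < Cardinal.lift.{1} κ := by
        calc #P ≤ #(Set.Iio ξ) := Cardinal.mk_image_le
          _ = Cardinal.lift.{1} ξ.card := Ordinal.mk_Iio_ordinal ξ
          _ < Cardinal.lift.{1} κ := Cardinal.lift_lt.2 (Cardinal.lt_ord.1 hξ)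
      set Bad : Set Ordinal.{0} := (⋃ p : ↥P, Set.Iic (p : Ordinal.{0})) ∪
        (⋃ A : ↥{A : Set Ordinal.{0} | A ⊆ P ∧ #A = (n : Cardinal)}, BB ↑A) with hBad
      have hBadcard : #Bad < Cardinal.lift.{1} κ := by
        refine lt_of_le_of_lt (Cardinal.mk_union_le _ _)
          (Cardinal.add_lt_of_lt haleph ?_ ?_)
        · exact mk_iUnion_lt' κ hreg _ hPcard (fun p => mk_Iic_lt κ hκ (hPsub p.2))
        · exact mk_iUnion_lt' κ hreg _
            (lt_of_le_of_lt (mk_nsubsets_le P n) (max_lt hPcard haleph'))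
            (fun A => hBBsmall _)
      have hdiffcard := mk_diff_eq κ hκ hH₀big.2 hBadcard
      have hdiff : ((H₀ \ Bad : Set Ordinal.{0})).Nonempty := by
        rw [← Set.nonempty_coe_sort, ← Cardinal.mk_ne_zero_iff, hdiffcard]
        exact ne_of_gt (aleph0_pos.trans_le haleph)
      obtain ⟨β, hβH, hβBad⟩ := hdiff
      refine ⟨β, hβH, ?_, ?_⟩
      · intro p hp
        by_contra hle
        push_neg at hle
        exact hβBad (Or.inl (Set.mem_iUnion.2 ⟨⟨p, hp⟩, hle⟩))
      · intro A hAP hAn hβB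
        exact hβBad (Or.inr (Set.mem_iUnion.2 ⟨⟨A, hAP, hAn⟩, hβB⟩))
    have hkey2 : ∀ ξ, ξ < κ.ord → hf ξ ∈ good (hf '' Set.Iio ξ) := by
      intro ξ
      induction ξ using Ordinal.induction with
      | _ ξ IH =>
        intro hξ
        have hprev : ∀ η, η < ξ → hf η ∈ H₀ := fun η hη => (IH η hη (hη.trans hξ)).1
        rw [hfix ξ]
        exact csInf_mem (hgoodne ξ hξ hprev)
    have hmem : ∀ ξ, ξ < κ.ord → hf ξ ∈ H₀ := fun ξ hξ => (hkey2 ξ hξ).1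
    have hmono : ∀ η ξ, η < ξ → ξ < κ.ord → hf η < hf ξ := by
      intro η ξ hηξ hξ
      exact (hkey2 ξ hξ).2.1 (hf η) ⟨η, hηξ, rfl⟩
    set H : Set Ordinal.{0} := hf '' Set.Iio κ.ord with hHdef
    have hHsubH₀ : H ⊆ H₀ := by rintro - ⟨ξ, hξ, rfl⟩; exact hmem ξ hξ
    have hHbig : H ∈ bigSets κ := by
      refine ⟨hHsubH₀.trans hH₀big.1, ?_⟩
      have hinj : Set.InjOn hf (Set.Iio κ.ord) := by
        intro x hx y hy hxy
        by_contra hne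
        rcases lt_or_gt_of_ne hne with hlt | hlt
        · exact absurd hxy (ne_of_lt (hmono x y hlt hy))
        · exact absurd hxy.symm (ne_of_lt (hmono y x hlt hx))
      rw [hHdef, Cardinal.mk_image_eq_of_injOn hf _ hinj, mk_Iio_ord']
    have hK : ∀ A, A ⊆ H → #A = (n : Cardinal) → ∀ x ∈ H, (∀ a ∈ A, a < x) →
        x ∉ BB A := by
      intro A hAH hAn x hxH hup
      obtain ⟨ξ, hξ, rfl⟩ := hxH
      have hAP : A ⊆ hf '' Set.Iio ξ := by
        intro a ha
        obtain ⟨η, hη, rfl⟩ := hAH ha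
        refine ⟨η, ?_, rfl⟩
        show η < ξ
        by_contra hnot
        push_neg at hnot
        rcases eq_or_lt_of_le hnot with rfl | hlt
        · exact absurd (hup _ ha) (lt_irrefl _)
        · exact absurd (hup _ ha) (not_lt.2 (hmono ξ η hlt hη).le)
      exact (hkey2 ξ hξ).2.2 A hAP hAn
    have hfinal : ∀ X ∈ subBig κ H, c X = αs := by
      intro X hX
      have hXH₀ : X ⊆ H₀ := hX.1.trans hHsubH₀
      have hXbig : X ∈ bigSets κ := ⟨hX.1.trans hHbig.1, hX.2⟩
      have hXinf : (ℵ₀ : Cardinal.{1}) ≤ #X := haleph.trans_eq hX.2.symm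
      obtain ⟨A, hAX, hAn, hAinit⟩ := initseg n hXinf
      have hAnset : A ∈ nSets κ n := ⟨hAX.trans hXbig.1, hAn⟩
      have hpat := hApat A hAnset (hAX.trans hXH₀)
      have hEx : ∃ B, (A, B) ∈ Q' αs :=
        ⟨BB A, by simp only [hQ'def, dif_pos hαslt]; exact hpat⟩
      have hdisj : Disjoint A (BB A) := hBBdisj A hEx
      have hBX : BB A ∩ X = ∅ := by
        rw [Set.eq_empty_iff_forall_notMem]
        rintro x ⟨hxB, hxX⟩
        by_cases hxA : x ∈ A
        · exact (Set.disjoint_left.1 hdisj hxA) hxB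
        · exact hK A (hAX.trans hX.1) hAn x (hX.1 hxX)
            (fun a ha => hAinit x ⟨hxX, hxA⟩ a ha) hxB
      exact (hkey X hXbig αs hαslt).2 ⟨(A, BB A), hpat, hAX, hBX⟩
    exact ⟨H, hHbig, fun X hX Y hY => (hfinal X hX).trans (hfinal Y hY).symm⟩
  · -- Case 1 : no pattern levels inside H₀, so c ≡ lam.ord on [H₀]^κ
    push_neg at hcase
    have hconst : ∀ X ∈ subBig κ H₀, c X = lam.ord := by
      intro X hX
      have hXbig : X ∈ bigSets κ := ⟨hX.1.trans hH₀big.1, hX.2⟩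
      rcases lt_or_eq_of_le (hc X hXbig) with hlt | heq
      · exfalso
        obtain ⟨p, hpQ, hmatch⟩ := (hkey X hXbig (c X) hlt).1 rfl
        have hp1fin : p.1 ∈ finSets κ := (hQ1 (c X) hlt p hpQ).1
        obtain ⟨m, hm⟩ := finite_mk_nat hp1fin.2
        have hTne : (T p.1).Nonempty := by
          refine ⟨c X, ?_⟩
          simp only [hTdef, Set.mem_setOf_eq, hQ'def, dif_pos hlt]
          exact ⟨p.2, by rwa [Prod.mk.eta]⟩
        have hdne : d p.1 ≠ 0 := by
          simp only [hddef, dif_pos hTne, Ordinal.add_one_eq_succ]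
          exact Order.succ_ne_bot _
        exact hdne (hcase m p.1 ⟨hp1fin.1, hm⟩ (hmatch.1.trans hX.1))
      · exact heq
    exact ⟨H₀, hH₀big, fun X hX Y hY => (hconst X hX).trans (hconst Y hY).symm⟩
end

section
/- Let κ be an uncountable cardinal and let 𝒰 be a normal ultrafilter on κ, i.e., a nonprincipal ultrafilter on κ that is κ-complete (closed under intersections of fewer than κ of its members) and closed under diagonal intersections (if Y_α ∈ 𝒰 for all α < κ, then {β < κ : β ∈ Y_α for all α < β} ∈ 𝒰). Then every set in Σ([κ]^{<ω}, 𝒫(κ) − 𝒰) is Ramsey, as witnessed by a homogeneous set H that belongs to 𝒰. -/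
open Set Cardinal

universe u

/-- `U` is a `κ`-complete nonprincipal ultrafilter on `κ` (viewed as the set of
ordinals `< κ`): a proper, upward-closed (within `𝒫(κ)`) family containing `κ`,
deciding every subset of `κ`, containing no singleton, and closed under
intersections of fewer than `κ` of its members. -/
def IsKCUltrafilter (κ : Cardinal.{0}) (U : Set (Set Ordinal.{0})) : Prop :=
  (∀ Y ∈ U, Y ⊆ Set.Iio κ.ord) ∧
  Set.Iio κ.ord ∈ U ∧
  (∅ : Set Ordinal.{0}) ∉ U ∧
  (∀ Y Z : Set Ordinal.{0}, Y ∈ U → Y ⊆ Z → Z ⊆ Set.Iio κ.ord → Z ∈ U) ∧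
  (∀ Y ⊆ Set.Iio κ.ord, Y ∈ U ∨ Set.Iio κ.ord \ Y ∈ U) ∧
  (∀ α : Ordinal.{0}, {α} ∉ U) ∧
  (∀ (I : Set Ordinal.{0}) (Y : Ordinal.{0} → Set Ordinal.{0}),
    I.Nonempty → #I < Cardinal.lift.{1} κ → (∀ i ∈ I, Y i ∈ U) → (⋂ i ∈ I, Y i) ∈ U)

/-- `U` is a normal ultrafilter on `κ`: a `κ`-complete nonprincipal ultrafilter
on `κ` closed under diagonal intersections. -/
def IsNormalUltrafilter (κ : Cardinal.{0}) (U : Set (Set Ordinal.{0})) : Prop :=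
  IsKCUltrafilter κ U ∧
  ∀ Y : Ordinal.{0} → Set Ordinal.{0}, (∀ α < κ.ord, Y α ∈ U) →
    {β | β < κ.ord ∧ ∀ α < β, β ∈ Y α} ∈ U

variable {κ : Cardinal.{0}} {U : Set (Set Ordinal.{0})}

lemma aleph0_lt_lift' (hκ : ℵ₀ < κ) : ℵ₀ < Cardinal.lift.{1} κ := by
  have := Cardinal.lift_lt.{0,1}.2 hκ
  simpa using this

lemma uf_inter (hU : IsKCUltrafilter κ U) (hκ : ℵ₀ < κ) {Y Z : Set Ordinal.{0}}
    (hY : Y ∈ U) (hZ : Z ∈ U) : Y ∩ Z ∈ U := by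
  obtain ⟨h1, h2, h3, h4, h5, h6, h7⟩ := hU
  have := h7 {(0 : Ordinal), 1} (fun o => if o = 0 then Y else Z) ⟨0, by simp⟩
    (by
      refine lt_of_le_of_lt Cardinal.mk_insert_le ?_
      rw [Cardinal.mk_singleton]
      refine lt_of_lt_of_le ?_ (le_of_lt (aleph0_lt_lift' hκ))
      exact Cardinal.lt_aleph0.2 ⟨2, by norm_num⟩)
    (by
      intro i hi
      rcases hi with h | h
      · simp [h, hY]
      · simp at h; simp [h, hZ])
  have heq : (⋂ i ∈ ({(0 : Ordinal), 1} : Set Ordinal), (if i = 0 then Y else Z)) = Y ∩ Z := by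
    ext x
    simp
  rwa [heq] at this

lemma uf_compl (hU : IsKCUltrafilter κ U) {B : Set Ordinal.{0}}
    (hB : B ⊆ Set.Iio κ.ord) (hBU : B ∉ U) : Set.Iio κ.ord \ B ∈ U := by
  rcases hU.2.2.2.2.1 B hB with h | h
  · exact absurd h hBU
  · exact h

lemma uf_iInter (hU : IsKCUltrafilter κ U) (hκ : ℵ₀ < κ) (Y : ℕ → Set Ordinal.{0})
    (hY : ∀ n, Y n ∈ U) : (⋂ n, Y n) ∈ U := by
  classical
  set I : Set Ordinal.{0} := Set.range (fun n : ℕ => (n : Ordinal)) with hI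
  set Z : Ordinal.{0} → Set Ordinal.{0} :=
    fun o => ⋂ (n : ℕ) (_ : (n : Ordinal) = o), Y n with hZ
  have hcard : #I < Cardinal.lift.{1} κ := by
    refine lt_of_le_of_lt ?_ (aleph0_lt_lift' hκ)
    have := Cardinal.mk_range_le_lift (f := fun n : ℕ => (n : Ordinal.{0}))
    exact (Set.countable_range _).le_aleph0
  have hmem : ∀ i ∈ I, Z i ∈ U := by
    rintro i ⟨n, rfl⟩
    have : Z (n : Ordinal) = Y n := by
      ext x
      simp only [hZ, Set.mem_iInter]
      constructor
      · intro h; exact h n rfl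
      · intro h m hm
        have : m = n := by exact_mod_cast Nat.cast_inj.1 hm
        rwa [this]
    rw [this]; exact hY n
  have h := hU.2.2.2.2.2.2 I Z ⟨0, ⟨0, by simp⟩⟩ hcard hmem
  have heq : (⋂ i ∈ I, Z i) = ⋂ n, Y n := by
    ext x
    simp only [Set.mem_iInter, hZ]
    constructor
    · intro h n
      exact h (n : Ordinal) ⟨n, rfl⟩ n rfl
    · rintro h o ⟨n, rfl⟩ m hm
      exact h m
  rwa [heq] at h

lemma uf_nonempty (hU : IsKCUltrafilter κ U) {Y : Set Ordinal.{0}} (hY : Y ∈ U) :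
    Y.Nonempty := by
  rcases Y.eq_empty_or_nonempty with rfl | h
  · exact absurd hY hU.2.2.1
  · exact h

lemma uf_card (hU : IsKCUltrafilter κ U) (hκ : ℵ₀ < κ) {Y : Set Ordinal.{0}} (hY : Y ∈ U) :
    #Y = Cardinal.lift.{1} κ := by
  have hsub : Y ⊆ Set.Iio κ.ord := hU.1 Y hY
  have hle : #Y ≤ Cardinal.lift.{1} κ := by
    have := Cardinal.mk_le_mk_of_subset hsub
    rwa [Ordinal.mk_Iio_ordinal, Cardinal.card_ord] at this
  rcases lt_or_eq_of_le hle with hlt | heq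
  · exfalso
    have hcompl : ∀ i ∈ Y, (Set.Iio κ.ord \ {i}) ∈ U := by
      intro i hi
      refine uf_compl hU (by intro x hx; simp at hx; subst hx; exact hsub hi) ?_
      exact hU.2.2.2.2.2.1 i
    have h := hU.2.2.2.2.2.2 Y (fun i => Set.Iio κ.ord \ {i}) (uf_nonempty hU hY) hlt hcompl
    have heq2 : (⋂ i ∈ Y, (Set.Iio κ.ord \ {i})) ∩ Y = ∅ := by
      ext x
      simp only [Set.mem_inter_iff, Set.mem_iInter, Set.mem_diff, Set.mem_empty_iff_false,
        iff_false, not_and]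
      intro h hx
      exact (h x hx).2 rfl
    have := uf_inter hU hκ h hY
    rw [heq2] at this
    exact hU.2.2.1 this
  · exact heq

lemma uf_diag (hU : IsNormalUltrafilter κ U) (hκ : ℵ₀ < κ) :
    ∀ (n : ℕ) (Y : (Fin n → Ordinal.{0}) → Set Ordinal.{0}), (∀ s, Y s ∈ U) →
      {β | β < κ.ord ∧ ∀ s : Fin n → Ordinal.{0}, (∀ i, s i < β) → β ∈ Y s} ∈ U := by
  intro n
  induction n with
  | zero =>
    intro Y hY
    have heq : {β | β < κ.ord ∧ ∀ s : Fin 0 → Ordinal.{0}, (∀ i, s i < β) → β ∈ Y s}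
        = Set.Iio κ.ord ∩ Y (Fin.elim0) := by
      ext β
      simp only [Set.mem_setOf_eq, Set.mem_inter_iff, Set.mem_Iio]
      constructor
      · intro ⟨h1, h2⟩
        exact ⟨h1, h2 Fin.elim0 (fun i => i.elim0)⟩
      · intro ⟨h1, h2⟩
        refine ⟨h1, fun s _ => ?_⟩
        have : s = Fin.elim0 := funext fun i => i.elim0
        rwa [this]
    rw [heq]
    exact uf_inter hU.1 hκ hU.1.2.1 (hY _)
  | succ n ih =>
    intro Y hY
    set W : Ordinal.{0} → Set Ordinal.{0} := fun α =>
      {β | β < κ.ord ∧ ∀ t : Fin n → Ordinal.{0}, (∀ i, t i < β) → β ∈ Y (Fin.cons α t)} with hW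
    have hWU : ∀ α, W α ∈ U := fun α => ih (fun t => Y (Fin.cons α t)) (fun t => hY _)
    have hD := hU.2 W (fun α _ => hWU α)
    refine hU.1.2.2.2.1 _ _ hD ?_ ?_
    · intro β hβ
      refine ⟨hβ.1, fun s hs => ?_⟩
      have h0 : s 0 < β := hs 0
      have hWβ := hβ.2 (s 0) h0
      have := hWβ.2 (Fin.tail s) (fun i => hs i.succ)
      rwa [Fin.cons_self_tail] at this
    · intro β hβ; exact hβ.1

lemma uf_rowbottom (hU : IsNormalUltrafilter κ U) (hκ : ℵ₀ < κ) :
    ∀ (n : ℕ) (c : (Fin n → Ordinal.{0}) → Bool),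
      ∃ H, H ∈ U ∧ ∃ bv : Bool, ∀ x : Fin n → Ordinal.{0},
        StrictMono x → (∀ i, x i ∈ H) → c x = bv := by
  intro n
  induction n with
  | zero =>
    intro c
    exact ⟨Set.Iio κ.ord, hU.1.2.1, c Fin.elim0, fun x _ _ => by
      have : x = Fin.elim0 := funext fun i => i.elim0
      rw [this]⟩
  | succ n ih =>
    intro c
    classical
    choose Hf hHf bf hbf using fun α : Ordinal.{0} => ih (fun t => c (Fin.cons α t))
    set T : Set Ordinal.{0} := {α | α < κ.ord ∧ bf α = true} with hT
    have hTsub : T ⊆ Set.Iio κ.ord := fun α hα => hα.1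
    obtain ⟨i, Ti, hTi, hbi⟩ :
        ∃ (i : Bool) (Ti : Set Ordinal.{0}), Ti ∈ U ∧ ∀ α ∈ Ti, bf α = i := by
      rcases hU.1.2.2.2.2.1 T hTsub with h | h
      · exact ⟨true, T, h, fun α hα => hα.2⟩
      · refine ⟨false, _, h, fun α hα => ?_⟩
        simp only [Set.mem_diff, Set.mem_Iio, hT, Set.mem_setOf_eq, not_and] at hα
        exact Bool.eq_false_iff.2 (fun hc => hα.2 hα.1 hc)
    have hD := hU.2 Hf (fun α _ => hHf α)
    refine ⟨Ti ∩ {β | β < κ.ord ∧ ∀ α < β, β ∈ Hf α}, uf_inter hU.1 hκ hTi hD, i, ?_⟩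
    intro x hx hxH
    have h0 : x 0 ∈ Ti := (hxH 0).1
    have htail : ∀ j : Fin n, Fin.tail x j ∈ Hf (x 0) := by
      intro j
      have hmem := (hxH j.succ).2
      exact hmem.2 (x 0) (hx (Fin.succ_pos j))
    have := hbf (x 0) (Fin.tail x) (fun a b hab => hx (Fin.succ_lt_succ_iff.2 hab)) htail
    rw [Fin.cons_self_tail] at this
    rw [this]
    exact hbi _ h0

lemma firstN {X : Set Ordinal.{0}} (hX : X.Infinite) (n : ℕ) :
    ∃ x : Fin n → Ordinal.{0}, StrictMono x ∧ (∀ i, x i ∈ X) ∧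
      ∀ β ∈ X, β ∉ Set.range x → ∀ i, x i < β := by
  induction n with
  | zero =>
    exact ⟨Fin.elim0, fun a => a.elim0, fun i => i.elim0, fun β _ _ i => i.elim0⟩
  | succ n ih =>
    obtain ⟨x, hmono, hmem, hlt⟩ := ih
    have hne : (X \ Set.range x).Nonempty := by
      have : (X \ Set.range x).Infinite :=
        Set.Infinite.diff hX (Set.finite_range x)
      exact this.nonempty
    set m : Ordinal.{0} := sInf (X \ Set.range x) with hm
    have hmmem : m ∈ X \ Set.range x := csInf_mem hne
    have hxm : ∀ i, x i < m := hlt m hmmem.1 hmmem.2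
    refine ⟨Fin.snoc x m, ?_, ?_, ?_⟩
    · intro a b hab
      rcases Fin.eq_castSucc_or_eq_last b with ⟨b', rfl⟩ | rfl
      · have ha' : a ≠ Fin.last n := by
          intro h
          rw [h] at hab
          exact absurd hab (not_lt.2 (Fin.le_last _))
        obtain ⟨a', rfl⟩ := Fin.exists_castSucc_eq.2 ha'
        rw [Fin.snoc_castSucc, Fin.snoc_castSucc]
        exact hmono (Fin.castSucc_lt_castSucc_iff.1 hab)
      · have ha' : a ≠ Fin.last n := ne_of_lt hab
        obtain ⟨a', rfl⟩ := Fin.exists_castSucc_eq.2 ha'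
        rw [Fin.snoc_castSucc, Fin.snoc_last]
        exact hxm a'
    · intro i
      rcases Fin.eq_castSucc_or_eq_last i with ⟨i', rfl⟩ | rfl
      · rw [Fin.snoc_castSucc]; exact hmem i'
      · rw [Fin.snoc_last]; exact hmmem.1
    · intro β hβ hβr i
      have hβx : β ∉ Set.range x := by
        rintro ⟨j, rfl⟩
        exact hβr ⟨Fin.castSucc j, by rw [Fin.snoc_castSucc]⟩
      have hβm : β ≠ m := by
        rintro rfl
        exact hβr ⟨Fin.last n, by rw [Fin.snoc_last]⟩
      have hmβ : m < β := lt_of_le_of_ne (csInf_le' ⟨hβ, hβx⟩) (Ne.symm hβm)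
      rcases Fin.eq_castSucc_or_eq_last i with ⟨i', rfl⟩ | rfl
      · rw [Fin.snoc_castSucc]; exact lt_trans (hxm i') hmβ
      · rw [Fin.snoc_last]; exact hmβ

lemma enumFin {A : Set Ordinal.{0}} (hA : A.Finite) :
    ∃ (n : ℕ) (x : Fin n → Ordinal.{0}), StrictMono x ∧ Set.range x = A := by
  classical
  refine ⟨hA.toFinset.card, hA.toFinset.orderEmbOfFin rfl, ?_, ?_⟩
  · exact (hA.toFinset.orderEmbOfFin rfl).strictMono
  · rw [Finset.range_orderEmbOfFin]
    exact hA.coe_toFinset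


/-- Let `κ` be uncountable and `𝒰` a normal ultrafilter on
`κ`.  Then every set in `Σ([κ]^{<ω}, 𝒫(κ) - 𝒰)` is Ramsey, as witnessed by a
homogeneous set `H` belonging to `𝒰`. -/
theorem statement12 (κ : Cardinal.{0}) (hκ : ℵ₀ < κ)
    (U : Set (Set Ordinal.{0})) (hU : IsNormalUltrafilter κ U) :
    ∀ S ∈ SigmaFam κ (finSets κ) {B | B ⊆ Set.Iio κ.ord ∧ B ∉ U},
      ∃ H ∈ bigSets κ, H ∈ U ∧ (subBig κ H ⊆ S ∨ subBig κ H ∩ S = ∅) := by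
  classical
  rintro S ⟨Q, hQ, rfl⟩
  have hwit : ∀ (n : ℕ) (x : Fin n → Ordinal.{0}), ∃ B : Set Ordinal.{0},
      (Set.Iio κ.ord \ B ∈ U) ∧
      ((∃ p ∈ Q, p.1 ⊆ Set.range x ∧ p.2 ∩ Set.range x = ∅) →
        ∃ p ∈ Q, p.2 = B ∧ p.1 ⊆ Set.range x ∧ p.2 ∩ Set.range x = ∅) := by
    intro n x
    by_cases h : ∃ p ∈ Q, p.1 ⊆ Set.range x ∧ p.2 ∩ Set.range x = ∅
    · obtain ⟨p, hp, h1, h2⟩ := h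
      obtain ⟨_, hp2, _⟩ := hQ p hp
      exact ⟨p.2, uf_compl hU.1 hp2.1 hp2.2, fun _ => ⟨p, hp, rfl, h1, h2⟩⟩
    · refine ⟨∅, ?_, fun hc => absurd hc h⟩
      have : Set.Iio κ.ord \ (∅ : Set Ordinal.{0}) = Set.Iio κ.ord := by simp
      rw [this]; exact hU.1.2.1
  choose Bw hBwU hBwwin using hwit
  have hP : ∀ n : ℕ, {β | β < κ.ord ∧ ∀ s : Fin n → Ordinal.{0},
      (∀ i, s i < β) → β ∈ Set.Iio κ.ord \ Bw n s} ∈ U :=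
    fun n => uf_diag hU hκ n _ (fun s => hBwU n s)
  choose Hb hHbU bb hbb using fun n : ℕ => uf_rowbottom hU hκ n
    (fun x => if (∃ p ∈ Q, p.1 ⊆ Set.range x ∧ p.2 ∩ Set.range x = ∅) then true else false)
  set H : Set Ordinal.{0} := (⋂ n, Hb n) ∩ ⋂ n, {β | β < κ.ord ∧
      ∀ s : Fin n → Ordinal.{0}, (∀ i, s i < β) → β ∈ Set.Iio κ.ord \ Bw n s} with hH
  have hHU : H ∈ U := uf_inter hU.1 hκ (uf_iInter hU.1 hκ _ hHbU) (uf_iInter hU.1 hκ _ hP)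
  have hHsub : H ⊆ Set.Iio κ.ord := hU.1.1 H hHU
  refine ⟨H, ⟨hHsub, uf_card hU.1 hκ hHU⟩, hHU, ?_⟩
  by_cases hex : ∃ n, bb n = true
  · left
    obtain ⟨n, hn⟩ := hex
    rintro X ⟨hXH, hXcard⟩
    have hXinf : X.Infinite := by
      rw [← Set.infinite_coe_iff, Cardinal.infinite_iff, hXcard]
      exact le_of_lt (aleph0_lt_lift' hκ)
    obtain ⟨x, hxm, hxmem, hxlt⟩ := firstN hXinf n
    have hxH : ∀ i, x i ∈ Hb n :=
      fun i => Set.mem_iInter.1 (hXH (hxmem i)).1 n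
    have hcx := hbb n x hxm hxH
    rw [hn] at hcx
    have hwin : ∃ p ∈ Q, p.1 ⊆ Set.range x ∧ p.2 ∩ Set.range x = ∅ := by
      by_contra h
      rw [if_neg h] at hcx
      exact Bool.false_ne_true hcx
    obtain ⟨p, hpQ, hpB, hp1, hp2⟩ := hBwwin n x hwin
    refine ⟨⟨fun a ha => hHsub (hXH ha), hXcard⟩, p, hpQ, ?_, ?_⟩
    · exact fun a ha => (by rintro a ⟨i, rfl⟩; exact hxmem i : Set.range x ⊆ X) (hp1 ha)
    · rw [Set.eq_empty_iff_forall_notMem]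
      rintro β ⟨hβB, hβX⟩
      by_cases hβr : β ∈ Set.range x
      · exact Set.eq_empty_iff_forall_notMem.1 hp2 β ⟨hβB, hβr⟩
      · have hβP : β ∈ {γ : Ordinal.{0} | γ < κ.ord ∧ ∀ s : Fin n → Ordinal.{0},
            (∀ i, s i < γ) → γ ∈ Set.Iio κ.ord \ Bw n s} :=
          Set.mem_iInter.1 (hXH hβX).2 n
        have hav := hβP.2 x (fun i => hxlt β hβX hβr i)
        exact hav.2 (hpB ▸ hβB)
  · right
    rw [Set.eq_empty_iff_forall_notMem]
    rintro X ⟨⟨hXH, hXcard⟩, hXS⟩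
    obtain ⟨hXbig, p, hpQ, hA, hB⟩ := hXS
    obtain ⟨hAfin, hp2', hdisj⟩ := hQ p hpQ
    obtain ⟨n, x, hxm, hxr⟩ := enumFin hAfin.2
    have hxH : ∀ i, x i ∈ Hb n := by
      intro i
      have hxi : x i ∈ p.1 := hxr ▸ Set.mem_range_self i
      exact Set.mem_iInter.1 (hXH (hA hxi)).1 n
    have hcx := hbb n x hxm hxH
    have hwin : ∃ q ∈ Q, q.1 ⊆ Set.range x ∧ q.2 ∩ Set.range x = ∅ := by
      refine ⟨p, hpQ, by rw [hxr], ?_⟩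
      rw [hxr]
      rw [Set.eq_empty_iff_forall_notMem]
      rintro β ⟨hβ2, hβ1⟩
      exact Set.eq_empty_iff_forall_notMem.1 hB β ⟨hβ2, hA hβ1⟩
    rw [if_pos hwin] at hcx
    exact hex ⟨n, hcx.symm⟩
end

section
/- Let κ be an uncountable cardinal and let 𝒰 be a κ-complete nonprincipal ultrafilter on κ (closed under intersections of fewer than κ of its members, but not assumed normal). Then every set in Σ([κ]^{<ω}, 𝒫(κ) − 𝒰) is Ramsey, i.e., for every such set there is a homogeneous H ∈ [κ]^κ. -/
open Set Cardinal

universe u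

/-- `a` is good: some pattern in `Q` has its positive part inside `a` and
negative part disjoint from `a`. -/
def GoodSet (Q : Set (Set Ordinal.{0} × Set Ordinal.{0})) (a : Set Ordinal.{0}) : Prop :=
  ∃ p ∈ Q, p.1 ⊆ a ∧ a ∩ p.2 = ∅

/-- The `ρ`-th level of the securing hierarchy. -/
noncomputable def SecR (κ : Cardinal.{0}) (U : Set (Set Ordinal.{0})) (Q : Set (Set Ordinal.{0} × Set Ordinal.{0})) : Ordinal.{0} → Set (Set Ordinal.{0}) :=
  Ordinal.lt_wf.fix fun ρ rec =>
    {a | GoodSet Q a ∨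
      {β | β < κ.ord ∧ (∀ γ ∈ a, γ < β) ∧
        ∃ ρ', ∃ h : ρ' < ρ, insert β a ∈ rec ρ' h} ∈ U}

/-- Secured sets. -/
def SecS (κ : Cardinal.{0}) (U : Set (Set Ordinal.{0})) (Q : Set (Set Ordinal.{0} × Set Ordinal.{0})) : Set (Set Ordinal.{0}) := {a | ∃ ρ, a ∈ SecR κ U Q ρ}

/-- Rank of a secured set. -/
noncomputable def rnk (κ : Cardinal.{0}) (U : Set (Set Ordinal.{0})) (Q : Set (Set Ordinal.{0} × Set Ordinal.{0})) (a : Set Ordinal.{0}) : Ordinal.{0} :=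
  sInf {ρ | a ∈ SecR κ U Q ρ}

lemma SecR_eq (κ : Cardinal.{0}) (U : Set (Set Ordinal.{0})) (Q : Set (Set Ordinal.{0} × Set Ordinal.{0})) (ρ : Ordinal.{0}) :
    SecR κ U Q ρ =
    {a | GoodSet Q a ∨
      {β | β < κ.ord ∧ (∀ γ ∈ a, γ < β) ∧
        ∃ ρ' , ∃ _ : ρ' < ρ, insert β a ∈ SecR κ U Q ρ'} ∈ U} := by
  rw [SecR, WellFounded.fix_eq]


lemma GoodSet.mem_SecS (κ : Cardinal.{0}) (U : Set (Set Ordinal.{0})) (Q : Set (Set Ordinal.{0} × Set Ordinal.{0})) {a : Set Ordinal.{0}} (h : GoodSet Q a) : a ∈ SecS κ U Q :=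
  ⟨0, by rw [SecR_eq]; exact Or.inl h⟩

lemma mem_SecR_rnk (κ : Cardinal.{0}) (U : Set (Set Ordinal.{0})) (Q : Set (Set Ordinal.{0} × Set Ordinal.{0})) {a : Set Ordinal.{0}} (h : a ∈ SecS κ U Q) :
    a ∈ SecR κ U Q (rnk κ U Q a) :=
  csInf_mem h

lemma rnk_le (κ : Cardinal.{0}) (U : Set (Set Ordinal.{0})) (Q : Set (Set Ordinal.{0} × Set Ordinal.{0})) {a : Set Ordinal.{0}} {ρ : Ordinal.{0}} (h : a ∈ SecR κ U Q ρ) :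
    rnk κ U Q a ≤ ρ := csInf_le' h

/-- If the set of one-point secured extensions of `a` is in `U`, then `a` is secured. -/
lemma secS_of_derived (κ : Cardinal.{0}) (U : Set (Set Ordinal.{0})) (Q : Set (Set Ordinal.{0} × Set Ordinal.{0})) (hU : IsKCUltrafilter κ U) {a : Set Ordinal.{0}}
    (h : {β | β < κ.ord ∧ (∀ γ ∈ a, γ < β) ∧ insert β a ∈ SecS κ U Q} ∈ U) :
    a ∈ SecS κ U Q := by
  set D := {β | β < κ.ord ∧ (∀ γ ∈ a, γ < β) ∧ insert β a ∈ SecS κ U Q} with hD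
  have hsmall : Small.{0} D := small_subset (s := Set.Iio κ.ord) (fun β hβ => hβ.1)
  have hsmall2 : Small.{0} ((fun β => rnk κ U Q (insert β a)) '' D) := by
    rw [Set.image_eq_range]
    exact small_range _
  have hbdd : BddAbove ((fun β => rnk κ U Q (insert β a)) '' D) :=
    Ordinal.bddAbove_of_small
  set ρ := sSup ((fun β => rnk κ U Q (insert β a)) '' D) + 1 with hρ
  refine ⟨ρ, ?_⟩
  rw [SecR_eq]
  refine Or.inr ?_
  have hsub : D ⊆ {β | β < κ.ord ∧ (∀ γ ∈ a, γ < β) ∧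
      ∃ ρ', ∃ _ : ρ' < ρ, insert β a ∈ SecR κ U Q ρ'} := by
    intro β hβ
    refine ⟨hβ.1, hβ.2.1, rnk κ U Q (insert β a), ?_, mem_SecR_rnk κ U Q hβ.2.2⟩
    calc rnk κ U Q (insert β a) ≤ sSup _ := le_csSup hbdd ⟨β, hβ, rfl⟩
    _ < ρ := lt_add_one _
  exact hU.2.2.2.1 _ _ h hsub (fun β hβ => hβ.1)



lemma U_nonempty (κ : Cardinal.{0}) (U : Set (Set Ordinal.{0})) (hU : IsKCUltrafilter κ U) {Y : Set Ordinal.{0}} (h : Y ∈ U) :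
    Y.Nonempty := by
  rcases Y.eq_empty_or_nonempty with rfl | hne
  · exact absurd h hU.2.2.1
  · exact hne

lemma U_compl_small (κ : Cardinal.{0}) (U : Set (Set Ordinal.{0})) (hU : IsKCUltrafilter κ U) (hκ : ℵ₀ < κ) {s : Set Ordinal.{0}}
    (hs : s ⊆ Set.Iio κ.ord) (hcard : #s < Cardinal.lift.{1} κ) :
    Set.Iio κ.ord \ s ∈ U := by
  rcases s.eq_empty_or_nonempty with rfl | hne
  · simpa using hU.2.1
  · have hsingle : ∀ α ∈ s, Set.Iio κ.ord \ {α} ∈ U := by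
      intro α hα
      rcases hU.2.2.2.2.1 {α} (by simpa using hs hα) with h | h
      · exact absurd h (hU.2.2.2.2.2.1 α)
      · exact h
    have := hU.2.2.2.2.2.2 s (fun α => Set.Iio κ.ord \ {α}) hne
      (lt_of_lt_of_le hcard le_rfl) hsingle
    have heq : (⋂ α ∈ s, (Set.Iio κ.ord \ {α})) = Set.Iio κ.ord \ s := by
      ext β
      simp only [Set.mem_iInter, Set.mem_diff, Set.mem_singleton_iff, Set.mem_Iio]
      constructor
      · rintro h
        obtain ⟨α₀, hα₀⟩ := hne
        exact ⟨(h α₀ hα₀).1, fun hβ => (h β hβ).2 rfl⟩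
      · rintro ⟨h1, h2⟩ α hα
        exact ⟨h1, fun hβα => h2 (hβα ▸ hα)⟩
    rwa [heq] at this

lemma U_sInter (κ : Cardinal.{0}) (U : Set (Set Ordinal.{0})) (hU : IsKCUltrafilter κ U) (hκ : ℵ₀ < κ) (𝒮 : Set (Set Ordinal.{0}))
    (h1 : 𝒮.Nonempty) (h2 : #𝒮 < Cardinal.lift.{1} κ) (h3 : ∀ s ∈ 𝒮, s ∈ U) :
    ⋂₀ 𝒮 ∈ U := by
  have hle : #𝒮 ≤ #(Set.Iio κ.ord) := by
    rw [Ordinal.mk_Iio_ordinal, Cardinal.card_ord]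
    exact h2.le
  obtain ⟨f⟩ := Cardinal.le_def _ _ |>.1 hle
  have : Nonempty ↥𝒮 := h1.to_subtype
  set e : ↥𝒮 → Ordinal.{0} := fun s => (f s : Ordinal.{0}) with he
  have einj : Function.Injective e := fun a b hab => f.injective (Subtype.ext hab)
  have hli : Function.LeftInverse (Function.invFun e) e := Function.leftInverse_invFun einj
  set Y : Ordinal.{0} → Set Ordinal.{0} := fun i => ((Function.invFun e i : ↥𝒮) : Set Ordinal.{0})
    with hY
  have key : ∀ sv : ↥𝒮, Y (e sv) = (sv : Set Ordinal.{0}) :=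
    fun sv => congrArg (fun t : ↥𝒮 => (t : Set Ordinal.{0})) (hli sv)
  have hmem : ∀ i ∈ Set.range e, Y i ∈ U := by
    rintro i ⟨sv, rfl⟩
    rw [key sv]; exact h3 _ sv.2
  have hcard : #(Set.range e) < Cardinal.lift.{1} κ := by
    rwa [Cardinal.mk_range_eq e einj]
  have hne : (Set.range e).Nonempty := Set.range_nonempty e
  have := hU.2.2.2.2.2.2 (Set.range e) Y hne hcard hmem
  have heq : (⋂ i ∈ Set.range e, Y i) = ⋂₀ 𝒮 := by
    ext x
    simp only [Set.mem_iInter, Set.mem_sInter, Set.mem_range]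
    constructor
    · intro h t ht
      have := h (e ⟨t, ht⟩) ⟨⟨t, ht⟩, rfl⟩
      rwa [key ⟨t, ht⟩] at this
    · rintro h i ⟨sv, rfl⟩
      rw [key sv]
      exact h _ sv.2
  rwa [heq] at this

lemma U_inter (κ : Cardinal.{0}) (U : Set (Set Ordinal.{0})) (hU : IsKCUltrafilter κ U) (hκ : ℵ₀ < κ) {Y Z : Set Ordinal.{0}}
    (hY : Y ∈ U) (hZ : Z ∈ U) : Y ∩ Z ∈ U := by
  have := U_sInter κ U hU hκ {Y, Z} ⟨Y, by simp⟩ ?_ ?_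
  · simpa using this
  · have : ({Y, Z} : Set (Set Ordinal.{0})).Finite :=
      (Set.finite_singleton Z).insert Y
    exact lt_trans this.lt_aleph0 (Cardinal.aleph0_lt_lift.2 hκ)
  · intro s hs
    rcases hs with rfl | rfl
    · exact hY
    · exact hZ


open Classical in
/-- The steering set attached to a finite set `a`. -/
noncomputable def StSet (κ : Cardinal.{0}) (U : Set (Set Ordinal.{0})) (Q : Set (Set Ordinal.{0} × Set Ordinal.{0})) (a : Set Ordinal.{0}) : Set Ordinal.{0} :=
  if hg : GoodSet Q a then Set.Iio κ.ord \ hg.choose.2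
  else if a ∈ SecS κ U Q then
    {β | β < κ.ord ∧ (∀ γ ∈ a, γ < β) ∧
      ∃ ρ', ∃ _ : ρ' < rnk κ U Q a, insert β a ∈ SecR κ U Q ρ'}
  else Set.Iio κ.ord \ {β | β < κ.ord ∧ (∀ γ ∈ a, γ < β) ∧ insert β a ∈ SecS κ U Q}

lemma StSet_good (κ : Cardinal.{0}) (U : Set (Set Ordinal.{0})) (Q : Set (Set Ordinal.{0} × Set Ordinal.{0})) {a : Set Ordinal.{0}} (hg : GoodSet Q a) :
    ∃ p ∈ Q, p.1 ⊆ a ∧ a ∩ p.2 = ∅ ∧ StSet κ U Q a = Set.Iio κ.ord \ p.2 := by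
  refine ⟨hg.choose, hg.choose_spec.1, hg.choose_spec.2.1, hg.choose_spec.2.2, ?_⟩
  rw [StSet, dif_pos hg]

lemma StSet_sec (κ : Cardinal.{0}) (U : Set (Set Ordinal.{0})) (Q : Set (Set Ordinal.{0} × Set Ordinal.{0})) {a : Set Ordinal.{0}} (hg : ¬ GoodSet Q a) (hs : a ∈ SecS κ U Q) :
    StSet κ U Q a = {β | β < κ.ord ∧ (∀ γ ∈ a, γ < β) ∧
      ∃ ρ', ∃ _ : ρ' < rnk κ U Q a, insert β a ∈ SecR κ U Q ρ'} := by
  rw [StSet, dif_neg hg, if_pos hs]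

lemma StSet_nsec (κ : Cardinal.{0}) (U : Set (Set Ordinal.{0})) (Q : Set (Set Ordinal.{0} × Set Ordinal.{0})) {a : Set Ordinal.{0}} (hg : ¬ GoodSet Q a) (hs : a ∉ SecS κ U Q) :
    StSet κ U Q a =
      Set.Iio κ.ord \ {β | β < κ.ord ∧ (∀ γ ∈ a, γ < β) ∧ insert β a ∈ SecS κ U Q} := by
  rw [StSet, dif_neg hg, if_neg hs]

lemma StSet_mem (κ : Cardinal.{0}) (U : Set (Set Ordinal.{0})) (Q : Set (Set Ordinal.{0} × Set Ordinal.{0})) (hU : IsKCUltrafilter κ U)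
    (hQ : ∀ p ∈ Q, p.2 ⊆ Set.Iio κ.ord ∧ p.2 ∉ U) (a : Set Ordinal.{0}) :
    StSet κ U Q a ∈ U := by
  by_cases hg : GoodSet Q a
  · obtain ⟨p, hpQ, -, -, heq⟩ := StSet_good κ U Q hg
    rw [heq]
    rcases hU.2.2.2.2.1 p.2 (hQ p hpQ).1 with h | h
    · exact absurd h (hQ p hpQ).2
    · exact h
  by_cases hs : a ∈ SecS κ U Q
  · rw [StSet_sec κ U Q hg hs]
    have hmem := mem_SecR_rnk κ U Q hs
    rw [SecR_eq] at hmem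
    rcases hmem with h | h
    · exact absurd h hg
    · exact h
  · rw [StSet_nsec κ U Q hg hs]
    have hd : {β | β < κ.ord ∧ (∀ γ ∈ a, γ < β) ∧ insert β a ∈ SecS κ U Q} ∉ U :=
      fun h => hs (secS_of_derived κ U Q hU h)
    rcases hU.2.2.2.2.1 _ (fun β (hβ : β < κ.ord ∧ _ ∧ _) => Set.mem_Iio.2 hβ.1) with h | h
    · exact absurd h hd
    · exact h

lemma mk_finite_subsets (κ : Cardinal.{0}) (hκ : ℵ₀ < κ) {F : Set Ordinal.{0}}
    (hF : #F < Cardinal.lift.{1} κ) :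
    #{a : Set Ordinal.{0} | a ⊆ F ∧ a.Finite} < Cardinal.lift.{1} κ := by
  by_cases hfin : F.Finite
  · have : {a : Set Ordinal.{0} | a ⊆ F ∧ a.Finite}.Finite :=
      hfin.finite_subsets.subset (fun a ha => ha.1)
    exact lt_trans this.lt_aleph0 (Cardinal.aleph0_lt_lift.2 hκ)
  · have hinf : Infinite ↥F := Set.infinite_coe_iff.2 hfin
    set 𝒮 := {a : Set Ordinal.{0} | a ⊆ F ∧ a.Finite} with h𝒮
    have hpre : ∀ a : ↥𝒮, (Subtype.val ⁻¹' (a : Set Ordinal.{0}) : Set ↥F).Finite :=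
      fun a => a.2.2.preimage (Subtype.val_injective.injOn)
    set g : ↥𝒮 → Finset ↥F := fun a => (hpre a).toFinset with hg
    have hginj : Function.Injective g := by
      intro a b hab
      apply Subtype.ext
      ext x
      constructor
      · intro hx
        have hxF : x ∈ F := a.2.1 hx
        have : (⟨x, hxF⟩ : ↥F) ∈ g a := by
          rw [hg]; simp only [Set.Finite.mem_toFinset, Set.mem_preimage]; exact hx
        rw [hab] at this
        rw [hg] at this; simpa using this
      · intro hx
        have hxF : x ∈ F := b.2.1 hx
        have : (⟨x, hxF⟩ : ↥F) ∈ g b := by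
          rw [hg]; simp only [Set.Finite.mem_toFinset, Set.mem_preimage]; exact hx
        rw [← hab] at this
        rw [hg] at this; simpa using this
    calc #↥𝒮 ≤ #(Finset ↥F) := Cardinal.mk_le_of_injective hginj
    _ = #↥F := Cardinal.mk_finset_of_infinite _
    _ < Cardinal.lift.{1} κ := hF

/-- The set of legal next points over a partial construction `F`. -/
noncomputable def Steer (κ : Cardinal.{0}) (U : Set (Set Ordinal.{0})) (Q : Set (Set Ordinal.{0} × Set Ordinal.{0})) (F : Set Ordinal.{0}) : Set Ordinal.{0} :=
  (Set.Iio κ.ord ∩ {β | ∀ γ ∈ F, γ < β}) ∩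
    ⋂₀ (StSet κ U Q '' {a | a ⊆ F ∧ a.Finite})

lemma Steer_mem (κ : Cardinal.{0}) (U : Set (Set Ordinal.{0})) (Q : Set (Set Ordinal.{0} × Set Ordinal.{0})) (hU : IsKCUltrafilter κ U) (hκ : ℵ₀ < κ)
    (hQ : ∀ p ∈ Q, p.2 ⊆ Set.Iio κ.ord ∧ p.2 ∉ U) {F : Set Ordinal.{0}}
    (hF1 : F ⊆ Set.Iio κ.ord) (hF2 : #F < Cardinal.lift.{1} κ) :
    Steer κ U Q F ∈ U := by
  apply U_inter κ U hU hκ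
  · rcases F.eq_empty_or_nonempty with rfl | hne
    · have heq : Set.Iio κ.ord ∩ {β | ∀ γ ∈ (∅ : Set Ordinal.{0}), γ < β} = Set.Iio κ.ord := by
        ext β; simp
      rw [heq]; exact hU.2.1
    · have heq : Set.Iio κ.ord ∩ {β | ∀ γ ∈ F, γ < β}
          = ⋂ γ ∈ F, (Set.Iio κ.ord \ Set.Iic γ) := by
        ext β
        simp only [Set.mem_inter_iff, Set.mem_iInter, Set.mem_diff, Set.mem_Iio, Set.mem_Iic,
          Set.mem_setOf_eq, not_le]
        constructor
        · rintro ⟨h1, h2⟩ γ hγ; exact ⟨h1, h2 γ hγ⟩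
        · intro h
          obtain ⟨γ₀, hγ₀⟩ := hne
          exact ⟨(h γ₀ hγ₀).1, fun γ hγ => (h γ hγ).2⟩
      rw [heq]
      apply hU.2.2.2.2.2.2 F _ hne hF2
      intro γ hγ
      refine U_compl_small κ U hU hκ ?_ ?_
      · exact fun x hx => Set.mem_Iio.mpr (lt_of_le_of_lt (Set.mem_Iic.mp hx) (hF1 hγ))
      · have h1 : Set.Iic γ = Set.Iio (Order.succ γ) := (Order.Iio_succ_of_not_isMax (not_isMax γ)).symm
        rw [h1, Ordinal.mk_Iio_ordinal, Cardinal.lift_lt, ← Cardinal.lt_ord]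
        exact (Cardinal.isSuccLimit_ord hκ.le).succ_lt (hF1 hγ)
  · apply U_sInter κ U hU hκ
    · exact ⟨StSet κ U Q ∅, ⟨∅, ⟨Set.empty_subset F, Set.finite_empty⟩, rfl⟩⟩
    · exact lt_of_le_of_lt Cardinal.mk_image_le (mk_finite_subsets κ hκ hF2)
    · rintro s ⟨a, -, rfl⟩
      exact StSet_mem κ U Q hU hQ a

/-- The transfinite recursion producing the homogeneous set. -/
noncomputable def hseq (κ : Cardinal.{0}) (U : Set (Set Ordinal.{0})) (Q : Set (Set Ordinal.{0} × Set Ordinal.{0})) : Ordinal.{0} → Ordinal.{0} :=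
  Ordinal.lt_wf.fix fun ξ rec =>
    sInf (Steer κ U Q {β | ∃ η, ∃ h : η < ξ, rec η h = β})

lemma hseq_eq (κ : Cardinal.{0}) (U : Set (Set Ordinal.{0})) (Q : Set (Set Ordinal.{0} × Set Ordinal.{0})) (ξ : Ordinal.{0}) :
    hseq κ U Q ξ = sInf (Steer κ U Q (hseq κ U Q '' Set.Iio ξ)) := by
  rw [hseq, WellFounded.fix_eq]
  apply congrArg
  apply congrArg
  ext β
  constructor
  · rintro ⟨η, hη, h⟩; exact ⟨η, hη, h⟩
  · rintro ⟨η, hη, h⟩; exact ⟨η, hη, h⟩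


lemma hseq_mem (κ : Cardinal.{0}) (U : Set (Set Ordinal.{0}))
    (Q : Set (Set Ordinal.{0} × Set Ordinal.{0})) (hU : IsKCUltrafilter κ U) (hκ : ℵ₀ < κ)
    (hQ : ∀ p ∈ Q, p.2 ⊆ Set.Iio κ.ord ∧ p.2 ∉ U) :
    ∀ ξ : Ordinal.{0}, ξ < κ.ord →
      hseq κ U Q ξ ∈ Steer κ U Q (hseq κ U Q '' Set.Iio ξ) := by
  intro ξ
  induction ξ using Ordinal.induction with
  | h ξ IH =>
    intro hξ
    have hsub : hseq κ U Q '' Set.Iio ξ ⊆ Set.Iio κ.ord := by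
      rintro β ⟨η, hη, rfl⟩
      exact (IH η (Set.mem_Iio.mp hη) (lt_trans (Set.mem_Iio.mp hη) hξ)).1.1
    have hcard : #(hseq κ U Q '' Set.Iio ξ) < Cardinal.lift.{1} κ := by
      refine lt_of_le_of_lt Cardinal.mk_image_le ?_
      rw [Ordinal.mk_Iio_ordinal, Cardinal.lift_lt, ← Cardinal.lt_ord]
      exact hξ
    have hmem := Steer_mem κ U Q hU hκ hQ hsub hcard
    rw [hseq_eq]
    exact csInf_mem (U_nonempty κ U hU hmem)

lemma hseq_lt (κ : Cardinal.{0}) (U : Set (Set Ordinal.{0}))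
    (Q : Set (Set Ordinal.{0} × Set Ordinal.{0})) (hU : IsKCUltrafilter κ U) (hκ : ℵ₀ < κ)
    (hQ : ∀ p ∈ Q, p.2 ⊆ Set.Iio κ.ord ∧ p.2 ∉ U)
    {η ξ : Ordinal.{0}} (hηξ : η < ξ) (hξ : ξ < κ.ord) :
    hseq κ U Q η < hseq κ U Q ξ :=
  (hseq_mem κ U Q hU hκ hQ ξ hξ).1.2 _ ⟨η, hηξ, rfl⟩

lemma hseq_level (κ : Cardinal.{0}) (U : Set (Set Ordinal.{0}))
    (Q : Set (Set Ordinal.{0} × Set Ordinal.{0})) (hU : IsKCUltrafilter κ U) (hκ : ℵ₀ < κ)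
    (hQ : ∀ p ∈ Q, p.2 ⊆ Set.Iio κ.ord ∧ p.2 ∉ U)
    {ξ : Ordinal.{0}} (hξ : ξ < κ.ord) :
    (hseq κ U Q '' Set.Iio κ.ord) ∩ Set.Iio (hseq κ U Q ξ) = hseq κ U Q '' Set.Iio ξ := by
  ext β
  constructor
  · rintro ⟨⟨η, hη, rfl⟩, hlt⟩
    refine ⟨η, ?_, rfl⟩
    by_contra hcon
    have hle : ξ ≤ η := not_lt.mp hcon
    rcases hle.lt_or_eq with h | h
    · exact absurd (Set.mem_Iio.mp hlt)
        (not_lt.mpr (hseq_lt κ U Q hU hκ hQ h (Set.mem_Iio.mp hη)).le)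
    · exact absurd (Set.mem_Iio.mp hlt) (by rw [h]; exact lt_irrefl _)
  · rintro ⟨η, hη, rfl⟩
    exact ⟨⟨η, lt_trans (Set.mem_Iio.mp hη) hξ, rfl⟩,
      hseq_lt κ U Q hU hκ hQ (Set.mem_Iio.mp hη) hξ⟩

lemma hseq_key (κ : Cardinal.{0}) (U : Set (Set Ordinal.{0}))
    (Q : Set (Set Ordinal.{0} × Set Ordinal.{0})) (hU : IsKCUltrafilter κ U) (hκ : ℵ₀ < κ)
    (hQ : ∀ p ∈ Q, p.2 ⊆ Set.Iio κ.ord ∧ p.2 ∉ U)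
    {ξ : Ordinal.{0}} (hξ : ξ < κ.ord) {a : Set Ordinal.{0}}
    (ha : a ⊆ hseq κ U Q '' Set.Iio ξ) (hfa : a.Finite) :
    hseq κ U Q ξ ∈ StSet κ U Q a :=
  (hseq_mem κ U Q hU hκ hQ ξ hξ).2 _ ⟨a, ⟨ha, hfa⟩, rfl⟩

lemma not_secS (κ : Cardinal.{0}) (U : Set (Set Ordinal.{0}))
    (Q : Set (Set Ordinal.{0} × Set Ordinal.{0})) (hU : IsKCUltrafilter κ U) (hκ : ℵ₀ < κ)
    (hQ : ∀ p ∈ Q, p.2 ⊆ Set.Iio κ.ord ∧ p.2 ∉ U)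
    (h0 : (∅ : Set Ordinal.{0}) ∉ SecS κ U Q) :
    ∀ t : Finset Ordinal.{0}, ↑t ⊆ hseq κ U Q '' Set.Iio κ.ord →
      (↑t : Set Ordinal.{0}) ∉ SecS κ U Q := by
  classical
  intro t
  induction t using Finset.induction_on_max with
  | empty => intro _; simpa using h0
  | insert b t hmax IH =>
    intro hsub
    have hbH : b ∈ hseq κ U Q '' Set.Iio κ.ord := hsub (by simp)
    obtain ⟨ξ, hξ, hbeq⟩ := hbH
    have hξ' : ξ < κ.ord := Set.mem_Iio.mp hξ
    have htsubH : (↑t : Set Ordinal.{0}) ⊆ hseq κ U Q '' Set.Iio κ.ord := by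
      intro x hx
      exact hsub (by simp only [Finset.coe_insert, Set.mem_insert_iff]; right; exact hx)
    have htsub : (↑t : Set Ordinal.{0}) ⊆ hseq κ U Q '' Set.Iio ξ := by
      intro x hx
      have : x ∈ (hseq κ U Q '' Set.Iio κ.ord) ∩ Set.Iio (hseq κ U Q ξ) :=
        ⟨htsubH hx, by rw [hbeq]; exact hmax x hx⟩
      rwa [hseq_level κ U Q hU hκ hQ hξ'] at this
    have hnot : (↑t : Set Ordinal.{0}) ∉ SecS κ U Q := IH htsubH
    have hng : ¬ GoodSet Q ↑t := fun hg => hnot (GoodSet.mem_SecS κ U Q hg)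
    have hkey := hseq_key κ U Q hU hκ hQ hξ' htsub t.finite_toSet
    rw [StSet_nsec κ U Q hng hnot] at hkey
    have hins : insert (hseq κ U Q ξ) (↑t : Set Ordinal.{0}) ∉ SecS κ U Q := by
      intro hcon
      exact hkey.2 ⟨Set.mem_Iio.mp hkey.1, fun γ hγ => hbeq ▸ hmax γ hγ, hcon⟩
    rw [hbeq] at hins
    intro hcon
    apply hins
    have : (↑(insert b t) : Set Ordinal.{0}) = insert b (↑t : Set Ordinal.{0}) :=
      Finset.coe_insert b t
    rwa [this] at hcon

lemma pos_match (κ : Cardinal.{0}) (U : Set (Set Ordinal.{0}))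
    (Q : Set (Set Ordinal.{0} × Set Ordinal.{0})) (hU : IsKCUltrafilter κ U) (hκ : ℵ₀ < κ)
    (hQ : ∀ p ∈ Q, p.2 ⊆ Set.Iio κ.ord ∧ p.2 ∉ U)
    {X : Set Ordinal.{0}} (hX : X ⊆ hseq κ U Q '' Set.Iio κ.ord) (hinf : X.Infinite) :
    ∀ ρ : Ordinal.{0}, ∀ a : Set Ordinal.{0}, a ∈ SecS κ U Q → rnk κ U Q a = ρ →
      a ⊆ X → a.Finite → (∀ β ∈ X \ a, ∀ γ ∈ a, γ < β) →
      ∃ p ∈ Q, Matches X p.1 p.2 := by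
  intro ρ
  induction ρ using Ordinal.induction with
  | h ρ IH =>
  intro a hsec hrnk haX hfin habove
  by_cases hg : GoodSet Q a
  · obtain ⟨p, hpQ, hp1, hp2, heq⟩ := StSet_good κ U Q hg
    refine ⟨p, hpQ, hp1.trans haX, ?_⟩
    apply Set.eq_empty_iff_forall_notMem.mpr
    rintro x ⟨hxp2, hxX⟩
    by_cases hxa : x ∈ a
    · exact Set.eq_empty_iff_forall_notMem.mp hp2 x ⟨hxa, hxp2⟩
    · obtain ⟨ξ, hξ, hxeq⟩ := hX hxX
      have hξ' : ξ < κ.ord := Set.mem_Iio.mp hξ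
      have hsubx : a ⊆ hseq κ U Q '' Set.Iio ξ := by
        intro γ hγ
        have : γ ∈ (hseq κ U Q '' Set.Iio κ.ord) ∩ Set.Iio (hseq κ U Q ξ) :=
          ⟨hX (haX hγ), by rw [hxeq]; exact habove x ⟨hxX, hxa⟩ γ hγ⟩
        rwa [hseq_level κ U Q hU hκ hQ hξ'] at this
      have hkey := hseq_key κ U Q hU hκ hQ hξ' hsubx hfin
      rw [heq, hxeq] at hkey
      exact hkey.2 hxp2
  · have hne : (X \ a).Nonempty := (hinf.diff hfin).nonempty
    set β₀ := sInf (X \ a) with hβ₀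
    have hβ₀mem : β₀ ∈ X \ a := csInf_mem hne
    obtain ⟨ξ, hξ, hβeq⟩ := hX hβ₀mem.1
    have hξ' : ξ < κ.ord := Set.mem_Iio.mp hξ
    have hsubx : a ⊆ hseq κ U Q '' Set.Iio ξ := by
      intro γ hγ
      have : γ ∈ (hseq κ U Q '' Set.Iio κ.ord) ∩ Set.Iio (hseq κ U Q ξ) :=
        ⟨hX (haX hγ), by rw [hβeq]; exact habove β₀ hβ₀mem γ hγ⟩
      rwa [hseq_level κ U Q hU hκ hQ hξ'] at this
    have hkey := hseq_key κ U Q hU hκ hQ hξ' hsubx hfin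
    rw [StSet_sec κ U Q hg hsec, hβeq] at hkey
    obtain ⟨-, -, ρ', hρ', hins⟩ := hkey
    have hsec' : insert β₀ a ∈ SecS κ U Q := ⟨ρ', hins⟩
    refine IH (rnk κ U Q (insert β₀ a))
      (lt_of_le_of_lt (rnk_le κ U Q hins) (hrnk ▸ hρ')) (insert β₀ a) hsec' rfl
      (Set.insert_subset hβ₀mem.1 haX) (hfin.insert β₀) ?_
    intro β hβ γ hγ
    have hβXa : β ∈ X \ a := ⟨hβ.1, fun h => hβ.2 (Set.mem_insert_of_mem _ h)⟩
    rcases Set.mem_insert_iff.mp hγ with rfl | hγa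
    · exact lt_of_le_of_ne (csInf_le' hβXa) (fun h => hβ.2 (h ▸ Set.mem_insert _ _))
    · exact habove β hβXa γ hγa

/-- Let `κ` be uncountable and `𝒰` a `κ`-complete
nonprincipal ultrafilter on `κ` (not assumed normal).  Then every set in
`Σ([κ]^{<ω}, 𝒫(κ) - 𝒰)` is Ramsey. -/
theorem statement13 (κ : Cardinal.{0}) (hκ : ℵ₀ < κ)
    (U : Set (Set Ordinal.{0})) (hU : IsKCUltrafilter κ U) :
    ∀ S ∈ SigmaFam κ (finSets κ) {B | B ⊆ Set.Iio κ.ord ∧ B ∉ U},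
      IsRamsey κ S := by
  rintro S ⟨Q, hQ, rfl⟩
  have hQ2 : ∀ p ∈ Q, p.2 ⊆ Set.Iio κ.ord ∧ p.2 ∉ U := fun p hp => (hQ p hp).2.1
  set H := hseq κ U Q '' Set.Iio κ.ord with hH
  have hHsub : H ⊆ Set.Iio κ.ord := by
    rintro β ⟨ξ, hξ, rfl⟩
    exact (hseq_mem κ U Q hU hκ hQ2 ξ (Set.mem_Iio.mp hξ)).1.1
  have hHcard : #H = Cardinal.lift.{1} κ := by
    have hinj : Set.InjOn (hseq κ U Q) (Set.Iio κ.ord) := by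
      intro η hη ξ hξ hEq
      by_contra hne
      rcases lt_or_gt_of_ne hne with h | h
      · exact absurd hEq (ne_of_lt (hseq_lt κ U Q hU hκ hQ2 h (Set.mem_Iio.mp hξ)))
      · exact absurd hEq.symm (ne_of_lt (hseq_lt κ U Q hU hκ hQ2 h (Set.mem_Iio.mp hη)))
    rw [hH, Cardinal.mk_image_eq_of_injOn _ _ hinj, Ordinal.mk_Iio_ordinal, Cardinal.card_ord]
  refine ⟨H, ⟨hHsub, hHcard⟩, ?_⟩
  by_cases h0 : (∅ : Set Ordinal.{0}) ∈ SecS κ U Q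
  · left
    rintro X ⟨hXH, hXcard⟩
    have hXIio : X ⊆ Set.Iio κ.ord := hXH.trans hHsub
    have hXinf : X.Infinite := by
      rw [← Set.infinite_coe_iff]
      refine Cardinal.infinite_iff.mpr ?_
      rw [hXcard]
      exact (Cardinal.aleph0_lt_lift.mpr hκ).le
    exact ⟨⟨hXIio, hXcard⟩, pos_match κ U Q hU hκ hQ2 hXH hXinf (rnk κ U Q ∅) ∅ h0 rfl
      (Set.empty_subset X) Set.finite_empty (by simp)⟩
  · right
    apply Set.eq_empty_iff_forall_notMem.mpr
    rintro X ⟨⟨hXH, hXcard⟩, hXbig, p, hpQ, hp1, hp2⟩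
    have hfin : (p.1 : Set Ordinal.{0}).Finite := (hQ p hpQ).1.2
    have hGood : GoodSet Q p.1 := by
      refine ⟨p, hpQ, subset_rfl, ?_⟩
      apply Set.eq_empty_iff_forall_notMem.mpr
      rintro x ⟨hx1, hx2⟩
      exact Set.eq_empty_iff_forall_notMem.mp hp2 x ⟨hx2, hp1 hx1⟩
    have hsubH : p.1 ⊆ H := hp1.trans hXH
    have hns := not_secS κ U Q hU hκ hQ2 h0 hfin.toFinset
      (by rw [Set.Finite.coe_toFinset]; exact hsubH)
    rw [Set.Finite.coe_toFinset] at hns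
    exact hns (GoodSet.mem_SecS κ U Q hGood)
end

section
/- Let κ > ω be a cardinal. Then (assuming the Axiom of Choice) there is a set 𝒮 ∈ Δ([κ]^ω, [κ]^{<κ}) that is not Ramsey. -/
open Set Cardinal

universe u

namespace St15

noncomputable section

/-- symmetric difference as plain set ops -/
def sd (A B : Set Ordinal.{0}) : Set Ordinal.{0} := (A \ B) ∪ (B \ A)

lemma sd_trans_subset (A B C : Set Ordinal.{0}) : sd A C ⊆ sd A B ∪ sd B C := by
  intro x hx
  simp only [sd, mem_union, mem_diff] at *
  tauto

def fdSetoid : Setoid (Set Ordinal.{0}) where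
  r A B := (sd A B).Finite
  iseqv := by
    refine ⟨fun A => ?_, fun {A B} h => ?_, fun {A B C} h1 h2 => ?_⟩
    · simp [sd]
    · rw [sd, union_comm]; exact h
    · exact ((h1.union h2).subset (sd_trans_subset A B C))

def rep (A : Set Ordinal.{0}) : Set Ordinal.{0} := (Quotient.mk fdSetoid A).out

lemma rep_equiv (A : Set Ordinal.{0}) : (sd A (rep A)).Finite := by
  have h : fdSetoid (rep A) A := Quotient.mk_out (s := fdSetoid) A
  exact fdSetoid.iseqv.symm h

lemma rep_eq_of {A B : Set Ordinal.{0}} (h : (sd A B).Finite) : rep A = rep B :=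
  congrArg Quotient.out (Quotient.sound h)

def cc (A : Set Ordinal.{0}) : Prop := Even (sd A (rep A)).ncard

lemma sd_erase {A R : Set Ordinal.{0}} {m : Ordinal.{0}} (hm : m ∈ A) :
    (m ∈ R → sd (A \ {m}) R = insert m (sd A R)) ∧
    (m ∉ R → sd (A \ {m}) R = sd A R \ {m}) := by
  constructor
  · intro hmR
    ext x
    by_cases hx : x = m
    · subst hx; simp [sd, hm, hmR]
    · simp only [sd, mem_union, mem_diff, mem_insert_iff, mem_singleton_iff, hx, false_or]
      try tauto
  · intro hmR
    ext x
    by_cases hx : x = m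
    · subst hx; simp [sd, hm, hmR]
    · simp only [sd, mem_union, mem_diff, mem_singleton_iff, hx, not_false_iff, and_true]
      try tauto

lemma cc_erase {A : Set Ordinal.{0}} {m : Ordinal.{0}} (hm : m ∈ A) :
    cc (A \ {m}) ↔ ¬ cc A := by
  have hAA : (sd (A \ {m}) A).Finite := by
    have : sd (A \ {m}) A ⊆ {m} := by
      intro x hx
      simp only [sd, mem_union, mem_diff, mem_singleton_iff] at hx ⊢
      try tauto
    exact (finite_singleton m).subset this
  have hrep : rep (A \ {m}) = rep A := rep_eq_of hAA
  set R := rep A with hR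
  have hD : (sd A R).Finite := rep_equiv A
  unfold cc
  rw [hrep, ← hR]
  by_cases hmR : m ∈ R
  · have heq : sd (A \ {m}) R = insert m (sd A R) := (sd_erase hm).1 hmR
    have hmD : m ∉ sd A R := by
      simp only [sd, mem_union, mem_diff]
      try tauto
    rw [heq, Set.ncard_insert_of_notMem hmD hD]
    exact (Nat.even_add_one).trans Iff.rfl
  · have heq : sd (A \ {m}) R = sd A R \ {m} := (sd_erase hm).2 hmR
    have hmD : m ∈ sd A R := by
      simp only [sd, mem_union, mem_diff, mem_singleton_iff]
      try tauto
    have hpos : 0 < (sd A R).ncard := (Set.ncard_pos hD).2 ⟨m, hmD⟩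
    obtain ⟨k, hk⟩ : ∃ k, (sd A R).ncard = k + 1 :=
      ⟨(sd A R).ncard - 1, (Nat.succ_pred_eq_of_pos hpos).symm⟩
    rw [heq, Set.ncard_diff_singleton_of_mem hmD, hk]
    simp [Nat.even_add_one]


def firstOmega (X : Set Ordinal.{0}) : Set Ordinal.{0} :=
  {x ∈ X | (X ∩ Set.Iio x).Finite}

lemma fo_subset (X : Set Ordinal.{0}) : firstOmega X ⊆ X := fun _ h => h.1

lemma fo_pred (X : Set Ordinal.{0}) :
    ∀ a ∈ firstOmega X, (firstOmega X ∩ Set.Iio a).Finite := by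
  intro a ha
  exact ha.2.subset (fun x hx => ⟨hx.1.1, hx.2⟩)

lemma fo_countable (X : Set Ordinal.{0}) : (firstOmega X).Countable := by
  rw [Set.countable_iff_exists_injective]
  refine ⟨fun a => (X ∩ Set.Iio (a : Ordinal)).ncard, ?_⟩
  intro a b hab
  simp only at hab
  by_contra hne
  have hne' : (a : Ordinal) ≠ b := fun h => hne (Subtype.ext h)
  have key : ∀ u v : ↥(firstOmega X), (u : Ordinal) < v →
      (X ∩ Set.Iio (u : Ordinal)).ncard < (X ∩ Set.Iio (v : Ordinal)).ncard := by
    intro u v huv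
    apply Set.ncard_lt_ncard _ v.2.2
    constructor
    · exact inter_subset_inter_right X (Iio_subset_Iio huv.le)
    · intro hsub
      have h1 : (u : Ordinal) ∈ X ∩ Set.Iio (u : Ordinal) := hsub ⟨u.2.1, mem_Iio.2 huv⟩
      exact lt_irrefl _ (mem_Iio.1 h1.2)
  rcases hne'.lt_or_gt with h | h
  · exact absurd hab (Nat.ne_of_lt (key a b h))
  · exact absurd hab.symm (Nat.ne_of_lt (key b a h))

/-- every element of X below the least element of `X \ firstOmega X` is in firstOmega X;
more useful form: if x ∈ X and all y ∈ X with y < x are "small", then x small.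
Key: X infinite → firstOmega X infinite. -/
lemma fo_infinite {X : Set Ordinal.{0}} (hX : X.Infinite) : (firstOmega X).Infinite := by
  by_contra hfin
  rw [Set.not_infinite] at hfin
  have hne : (X \ firstOmega X).Nonempty := by
    by_contra hempty
    rw [Set.not_nonempty_iff_eq_empty, diff_eq_empty] at hempty
    exact hX (hfin.subset hempty)
  set x₀ := sInf (X \ firstOmega X) with hx₀
  have hx₀mem : x₀ ∈ X \ firstOmega X := csInf_mem hne
  have hsub : X ∩ Set.Iio x₀ ⊆ firstOmega X := by
    intro y hy
    by_contra hyn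
    have hmem : y ∈ X \ firstOmega X := (mem_diff y).2 ⟨hy.1, hyn⟩
    have hle : x₀ ≤ y := csInf_le (OrderBot.bddBelow _) hmem
    exact absurd (mem_Iio.1 hy.2) (not_lt.2 hle)
  exact hx₀mem.2 ⟨hx₀mem.1, hfin.subset hsub⟩

/-- if x ∈ X is not in firstOmega X, then firstOmega X ⊆ Iio x and X ∩ Iio x avoids nothing...
bound: every element of firstOmega X is < x. -/
lemma fo_lt_of_not_mem {X : Set Ordinal.{0}} {x : Ordinal.{0}} (hx : x ∈ X)
    (hxn : x ∉ firstOmega X) : ∀ a ∈ firstOmega X, a < x := by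
  intro a ha
  by_contra hlt
  push_neg at hlt
  rcases hlt.lt_or_eq with h | h
  · exact hxn ⟨hx, ha.2.subset (inter_subset_inter_right X (Iio_subset_Iio h.le))⟩
  · exact hxn (h ▸ ha)


lemma big_infinite {κ : Cardinal.{0}} (hκ : ℵ₀ < κ) {X : Set Ordinal.{0}}
    (hX : X ∈ bigSets κ) : X.Infinite := by
  rw [← Set.infinite_coe_iff, Cardinal.infinite_iff, hX.2, ← Cardinal.lift_aleph0.{1,0}]
  exact Cardinal.lift_le.2 hκ.le

lemma exists_bound {κ : Cardinal.{0}} (hκ : ℵ₀ < κ) {X : Set Ordinal.{0}}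
    (hX : X ∈ bigSets κ) :
    ∃ x, x ∈ X ∧ x < Cardinal.ord κ ∧ (∀ a ∈ firstOmega X, a < x) ∧
      X ∩ (Set.Iio x \ firstOmega X) = ∅ := by
  have hne : (X \ firstOmega X).Nonempty := by
    by_contra hempty
    rw [Set.not_nonempty_iff_eq_empty, diff_eq_empty] at hempty
    have hc : X.Countable := (fo_countable X).mono hempty
    have h1 : #X ≤ ℵ₀ :=
      Cardinal.mk_le_aleph0_iff.mpr (Set.countable_coe_iff.mpr hc)
    rw [hX.2, ← Cardinal.lift_aleph0.{1,0}, Cardinal.lift_le] at h1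
    exact absurd h1 (not_le.2 hκ)
  set x := sInf (X \ firstOmega X) with hxdef
  have hxmem : x ∈ X \ firstOmega X := csInf_mem hne
  refine ⟨x, hxmem.1, hX.1 hxmem.1, fo_lt_of_not_mem hxmem.1 hxmem.2, ?_⟩
  ext y
  simp only [mem_inter_iff, mem_diff, mem_Iio, mem_empty_iff_false, iff_false, not_and]
  intro hyX hylt hyn
  have hle : x ≤ y := csInf_le (OrderBot.bddBelow _) ((mem_diff y).2 ⟨hyX, hyn⟩)
  exact absurd hylt (not_lt.2 hle)

lemma match_eq {X A : Set Ordinal.{0}} {x : Ordinal.{0}}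
    (hAinf : A.Infinite) (hApred : ∀ a ∈ A, (A ∩ Set.Iio a).Finite)
    (hAx : A ⊆ Set.Iio x) (hAX : A ⊆ X) (hXB : X ∩ (Set.Iio x \ A) = ∅) :
    firstOmega X = A := by
  have hkey : ∀ y ∈ X, y < x → y ∈ A := by
    intro y hy hylt
    by_contra hyn
    have : y ∈ X ∩ (Set.Iio x \ A) := ⟨hy, mem_Iio.2 hylt, hyn⟩
    rw [hXB] at this
    exact this
  apply Set.eq_of_subset_of_subset
  · intro z hz
    by_cases hzx : z < x
    · exact hkey z hz.1 hzx
    · exfalso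
      apply hAinf
      apply hz.2.subset
      intro a ha
      exact ⟨hAX ha, mem_Iio.2 (lt_of_lt_of_le (mem_Iio.1 (hAx ha)) (not_lt.1 hzx))⟩
  · intro a ha
    refine ⟨hAX ha, ?_⟩
    apply (hApred a ha).subset
    intro y hy
    have hya : y < a := mem_Iio.1 hy.2
    have hyx : y < x := lt_trans hya (mem_Iio.1 (hAx ha))
    exact ⟨hkey y hy.1 hyx, hy.2⟩

lemma fo_in_omegaSets {κ : Cardinal.{0}} (hκ : ℵ₀ < κ) {X : Set Ordinal.{0}}
    (hX : X ∈ bigSets κ) : firstOmega X ∈ omegaSets κ :=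
  ⟨(fo_subset X).trans hX.1, fo_infinite (big_infinite hκ hX), fo_pred X⟩

/-- the family of patterns coding `P (firstOmega X)` -/
def goodQ (κ : Cardinal.{0}) (P : Set Ordinal.{0} → Prop) :
    Set (Set Ordinal.{0} × Set Ordinal.{0}) :=
  {p | ∃ A x, A ∈ omegaSets κ ∧ A ⊆ Set.Iio x ∧ x < Cardinal.ord κ ∧ P A ∧
    p = (A, Set.Iio x \ A)}

lemma goodQ_props (κ : Cardinal.{0}) (P : Set Ordinal.{0} → Prop) :
    ∀ p ∈ goodQ κ P, p.1 ∈ omegaSets κ ∧ p.2 ∈ smallSets κ κ ∧ Disjoint p.1 p.2 := by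
  rintro p ⟨A, x, hA, hAx, hx, hP, rfl⟩
  refine ⟨hA, ⟨?_, ?_⟩, ?_⟩
  · intro y hy
    exact mem_Iio.2 (lt_trans (mem_Iio.1 hy.1) hx)
  · calc #(Set.Iio x \ A : Set Ordinal.{0}) ≤ #(Set.Iio x : Set Ordinal.{0}) :=
          Cardinal.mk_le_mk_of_subset diff_subset
      _ = Cardinal.lift.{1} x.card := Ordinal.mk_Iio_ordinal x
      _ < Cardinal.lift.{1} κ := Cardinal.lift_lt.2 (Cardinal.lt_ord.1 hx)
  · exact disjoint_sdiff_self_right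

lemma union_eq (κ : Cardinal.{0}) (hκ : ℵ₀ < κ) (P : Set Ordinal.{0} → Prop) :
    {X ∈ bigSets κ | ∃ p ∈ goodQ κ P, Matches X p.1 p.2} =
    {X ∈ bigSets κ | P (firstOmega X)} := by
  ext X
  simp only [mem_setOf_eq]
  constructor
  · rintro ⟨hX, p, ⟨A, x, hA, hAx, hx, hP, rfl⟩, hAXsub, hBX⟩
    have hfo : firstOmega X = A := by
      apply match_eq hA.2.1 hA.2.2 hAx hAXsub
      rw [inter_comm]; exact hBX
    exact ⟨hX, hfo ▸ hP⟩
  · rintro ⟨hX, hP⟩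
    obtain ⟨x, hxX, hxord, hbnd, hinter⟩ := exists_bound hκ hX
    refine ⟨hX, (firstOmega X, Set.Iio x \ firstOmega X),
      ⟨firstOmega X, x, fo_in_omegaSets hκ hX, fun a ha => mem_Iio.2 (hbnd a ha),
        hxord, hP, rfl⟩, fo_subset X, ?_⟩
    rw [inter_comm]; exact hinter

lemma mk_diff_singleton {κ : Cardinal.{0}} (hκ : ℵ₀ < κ) {H : Set Ordinal.{0}}
    (hH : #H = Cardinal.lift.{1} κ) {m : Ordinal.{0}} (hm : m ∈ H) :
    #(H \ {m} : Set Ordinal.{0}) = Cardinal.lift.{1} κ := by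
  have hsub : {m} ⊆ H := singleton_subset_iff.2 hm
  have heq : #(H \ {m} : Set Ordinal.{0}) + #({m} : Set Ordinal.{0}) = #H :=
    Cardinal.mk_diff_add_mk hsub
  rw [Cardinal.mk_singleton] at heq
  have hinf : ℵ₀ ≤ #(H \ {m} : Set Ordinal.{0}) := by
    by_contra hlt
    push_neg at hlt
    have h1 : #(H \ {m} : Set Ordinal.{0}) + 1 < ℵ₀ :=
      Cardinal.add_lt_aleph0 hlt Cardinal.one_lt_aleph0
    rw [heq, hH] at h1
    have : ℵ₀ < Cardinal.lift.{1} κ := by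
      rw [← Cardinal.lift_aleph0.{1,0}]; exact Cardinal.lift_lt.2 hκ
    exact absurd h1 (not_lt.2 this.le)
  calc #(H \ {m} : Set Ordinal.{0}) = #(H \ {m} : Set Ordinal.{0}) + 1 :=
        (Cardinal.add_one_of_aleph0_le hinf).symm
    _ = #H := heq
    _ = Cardinal.lift.{1} κ := hH

lemma fo_diff_min {H : Set Ordinal.{0}} {m : Ordinal.{0}} :
    firstOmega (H \ {m}) = firstOmega H \ {m} := by
  have hfin : ∀ x : Ordinal.{0}, ((H \ {m}) ∩ Set.Iio x).Finite ↔ (H ∩ Set.Iio x).Finite := by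
    intro x
    constructor
    · intro h
      apply (h.union (finite_singleton m)).subset
      intro y hy
      by_cases hym : y = m
      · exact Or.inr (hym ▸ rfl)
      · exact Or.inl ⟨⟨hy.1, hym⟩, hy.2⟩
    · intro h
      exact h.subset fun y hy => ⟨hy.1.1, hy.2⟩
  ext x
  simp only [firstOmega, mem_setOf_eq, mem_diff, mem_singleton_iff, hfin x]
  tauto

end

end St15

/-- For every cardinal `κ > ω` there is a set
`𝒮 ∈ Δ([κ]^ω, [κ]^{<κ})` that is not Ramsey. -/
theorem statement15 (κ : Cardinal.{0}) (hκ : ℵ₀ < κ) :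
    ∃ S ∈ DeltaFam κ (omegaSets κ) (smallSets κ κ), ¬ IsRamsey κ S := by
  classical
  set S : Set (Set Ordinal.{0}) := {X ∈ bigSets κ | St15.cc (St15.firstOmega X)} with hS
  have hSmem : ∀ X, X ∈ S ↔ X ∈ bigSets κ ∧ St15.cc (St15.firstOmega X) := fun X => Iff.rfl
  refine ⟨S, ⟨?_, ?_⟩, ?_⟩
  · -- S ∈ SigmaFam
    refine ⟨St15.goodQ κ St15.cc, St15.goodQ_props κ _, ?_⟩
    rw [St15.union_eq κ hκ St15.cc]
  · -- complement ∈ SigmaFam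
    refine ⟨St15.goodQ κ (fun A => ¬ St15.cc A), St15.goodQ_props κ _, ?_⟩
    rw [St15.union_eq κ hκ (fun A => ¬ St15.cc A)]
    ext X
    simp only [mem_diff, hS, mem_setOf_eq]
    tauto
  · -- not Ramsey
    rintro ⟨H, hH, hhom⟩
    have hHinf : H.Infinite := St15.big_infinite hκ hH
    have hne : H.Nonempty := hHinf.nonempty
    set m := sInf H with hm
    have hmH : m ∈ H := csInf_mem hne
    have hmfo : m ∈ St15.firstOmega H := by
      refine ⟨hmH, ?_⟩
      have : H ∩ Set.Iio m = ∅ := by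
        ext y
        simp only [mem_inter_iff, mem_Iio, mem_empty_iff_false, iff_false, not_and]
        intro hy
        exact not_lt.2 (csInf_le (OrderBot.bddBelow _) hy)
      rw [this]; exact finite_empty
    have hH' : (H \ {m}) ∈ bigSets κ :=
      ⟨(diff_subset).trans hH.1, St15.mk_diff_singleton hκ hH.2 hmH⟩
    have hfo' : St15.firstOmega (H \ {m}) = St15.firstOmega H \ {m} := St15.fo_diff_min
    have hflip : St15.cc (St15.firstOmega (H \ {m})) ↔ ¬ St15.cc (St15.firstOmega H) := by
      rw [hfo']; exact St15.cc_erase hmfo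
    have hHsub : H ∈ subBig κ H := ⟨subset_rfl, hH.2⟩
    have hH'sub : (H \ {m}) ∈ subBig κ H := ⟨diff_subset, hH'.2⟩
    rcases hhom with hsub | hdis
    · have h1 : St15.cc (St15.firstOmega H) := ((hSmem H).1 (hsub hHsub)).2
      have h2 : St15.cc (St15.firstOmega (H \ {m})) := ((hSmem _).1 (hsub hH'sub)).2
      exact (hflip.1 h2) h1
    · have h1 : H ∉ S := by
        intro h
        have hmem : H ∈ subBig κ H ∩ S := ⟨hHsub, h⟩
        rw [hdis] at hmem
        exact hmem
      have h2 : (H \ {m}) ∉ S := by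
        intro h
        have hmem : (H \ {m}) ∈ subBig κ H ∩ S := ⟨hH'sub, h⟩
        rw [hdis] at hmem
        exact hmem
      have hc1 : ¬ St15.cc (St15.firstOmega H) := fun hc => h1 ((hSmem H).2 ⟨hH, hc⟩)
      have hc2 : ¬ St15.cc (St15.firstOmega (H \ {m})) := fun hc => h2 ((hSmem _).2 ⟨hH', hc⟩)
      exact hc2 (hflip.2 hc1)
end
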